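/- arXiv:1708.06479 — 8 statements merged into one kernel-verified Lean document; each statement's English description precedes it below -/
import Mathlib

section
/- Let b ≥ 2 be an integer, let p ≥ 1 be an integer, let α > 1 be real, and let z ≥ 0 be real. Then ∑_{n=1}^{b^p−1} s_b(n)·((z+n)^{−α} − (z+n+1)^{−α}) = ∑_{l=0}^{p−1} b^{−αl}·[ζ(α, 1 + z/b^l) − ζ(α, 1 + (z+b^p)/b^l)] − ∑_{l=1}^{p} b·b^{−αl}·[ζ(α, 1 + z/b^l) − ζ(α, 1 + (z+b^p)/b^l)]. -/
/-- Sum of digits of `n` in base `b`. -/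
def digitSum (b n : ℕ) : ℕ := (Nat.digits b n).sum

/-- Hurwitz zeta function `ζ(α, w) = ∑_{n ≥ 0} (w + n)^(-α)` for real `α > 1`, `w > 0`. -/
noncomputable def hurwitzZetaReal (α w : ℝ) : ℝ := ∑' n : ℕ, (w + n) ^ (-α)

lemma digitSum_int (b K m : ℕ) (hb : 2 ≤ b) (hm : m < b ^ K) :
    (digitSum b m : ℤ) = m - (b - 1) * ∑ i ∈ Finset.range K, (m / b ^ (i + 1) : ℕ) := by
  rcases Nat.eq_zero_or_pos m with rfl | hm0
  · simp [digitSum]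
  have hlog : Nat.log b m + 1 ≤ K := Nat.log_lt_of_lt_pow (by omega) hm
  have hnat := Nat.sub_one_mul_sum_log_div_pow_eq_sub_sum_digits (p := b) m
  have hsum : ∑ i ∈ Finset.range K, m / b ^ (i + 1) =
      ∑ i ∈ Finset.range (Nat.log b m).succ, m / b ^ (i + 1) := by
    refine (Finset.sum_subset (Finset.range_subset_range.2 hlog) ?_).symm
    intro i _ hi
    simp only [Finset.mem_range, not_lt] at hi
    refine Nat.div_eq_of_lt ?_
    calc m < b ^ (Nat.log b m).succ := Nat.lt_pow_succ_log_self (by omega) m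
    _ ≤ b ^ (i + 1) := Nat.pow_le_pow_right (by omega) (by omega)
  have hle : digitSum b m ≤ m := Nat.digit_sum_le b m
  have key : ((b - 1) * ∑ i ∈ Finset.range (Nat.log b m).succ, m / b ^ (i + 1) : ℕ)
      = m - digitSum b m := hnat
  rw [hsum]
  have hb1 : 1 ≤ b := by omega
  zify [hle, hb1] at key
  push_cast
  linarith [key]

lemma summable_aux {α : ℝ} (hα : 1 < α) {w : ℝ} (hw : 0 ≤ w) :
    Summable (fun n : ℕ => (1 + w + n) ^ (-α)) := by
  have h1 : Summable (fun n : ℕ => ((n : ℝ)) ^ (-α)) :=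
    Real.summable_nat_rpow.2 (by linarith)
  have h2 : Summable (fun n : ℕ => ((n + 1 : ℕ) : ℝ) ^ (-α)) :=
    (summable_nat_add_iff 1).2 h1
  refine Summable.of_nonneg_of_le (fun n => Real.rpow_nonneg (by positivity) _) (fun n => ?_) h2
  push_cast
  exact Real.rpow_le_rpow_of_nonpos (by positivity) (by linarith) (by linarith)

lemma zeta_partial {α : ℝ} (hα : 1 < α) {w : ℝ} (hw : 0 ≤ w) (M : ℕ) :
    hurwitzZetaReal α (1 + w) - hurwitzZetaReal α (1 + w + M) =
      ∑ m ∈ Finset.Icc 1 M, (w + m) ^ (-α) := by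
  have hs := summable_aux hα hw
  have key := Summable.sum_add_tsum_nat_add (f := fun n : ℕ => (1 + w + n) ^ (-α)) M hs
  have h2 : hurwitzZetaReal α (1 + w + M) = ∑' n : ℕ, (1 + w + ((n + M : ℕ) : ℝ)) ^ (-α) := by
    unfold hurwitzZetaReal
    congr 1 with n
    push_cast
    ring_nf
  have h1 : hurwitzZetaReal α (1 + w) = ∑' n : ℕ, (1 + w + n) ^ (-α) := rfl
  rw [h1, h2, ← key, add_sub_cancel_right]
  rw [show ∑ m ∈ Finset.Icc 1 M, (w + m) ^ (-α) = ∑ m ∈ Finset.Ico 1 (M + 1), (w + m) ^ (-α) by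
    rw [Finset.Ico_add_one_right_eq_Icc]]
  rw [Finset.sum_Ico_eq_sum_range]
  simp only [Nat.add_sub_cancel]
  refine Finset.sum_congr rfl fun i _ => ?_
  push_cast
  ring_nf

lemma term_eq (b p l : ℕ) (hb : 2 ≤ b) (hl : l ≤ p) (α z : ℝ) (hα : 1 < α) (hz : 0 ≤ z) :
    (b : ℝ) ^ (-(α * l)) *
      (hurwitzZetaReal α (1 + z / b ^ l) - hurwitzZetaReal α (1 + (z + b ^ p) / b ^ l)) =
    ∑ n ∈ (Finset.Icc 1 (b ^ p)).filter (fun n => b ^ l ∣ n), (z + n) ^ (-α) := by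
  have hb0 : (0:ℝ) < (b:ℝ) := by positivity
  have hbl : (0:ℝ) < (b:ℝ) ^ l := by positivity
  set w : ℝ := z / (b:ℝ) ^ l with hw_def
  have hw : 0 ≤ w := by positivity
  have hppow : ((b:ℝ)) ^ p = (b:ℝ) ^ l * (b:ℝ) ^ (p - l) := by
    rw [← pow_add]; congr 1; omega
  have hM : 1 + (z + (b:ℝ) ^ p) / (b:ℝ) ^ l = 1 + w + ((b ^ (p - l) : ℕ) : ℝ) := by
    rw [hw_def]
    push_cast
    field_simp
    rw [hppow]; ring
  have hz1 : 1 + z / (b:ℝ) ^ l = 1 + w := rfl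
  rw [hz1, hM, zeta_partial hα hw, Finset.mul_sum]
  refine Finset.sum_nbij' (fun m => m * b ^ l) (fun n => n / b ^ l) ?_ ?_ ?_ ?_ ?_
  · intro m hm
    simp only [Finset.mem_Icc, Finset.mem_filter] at hm ⊢
    have hblN : 0 < b ^ l := Nat.pow_pos (by omega)
    refine ⟨⟨by nlinarith [hm.1, hblN], ?_⟩, Dvd.intro_left m rfl⟩
    calc m * b ^ l ≤ b ^ (p - l) * b ^ l := Nat.mul_le_mul_right _ hm.2
    _ = b ^ p := by rw [← pow_add]; congr 1; omega
  · intro n hn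
    simp only [Finset.mem_Icc, Finset.mem_filter] at hn ⊢
    obtain ⟨⟨h1, h2⟩, hd⟩ := hn
    have hblN : 0 < b ^ l := Nat.pow_pos (by omega)
    constructor
    · rw [Nat.one_le_div_iff hblN]
      exact Nat.le_of_dvd (by omega) hd
    · calc n / b ^ l ≤ b ^ p / b ^ l := Nat.div_le_div_right h2
      _ = b ^ (p - l) := Nat.pow_div hl (by omega)
  · intro m _
    exact Nat.mul_div_cancel m (Nat.pow_pos (by omega))
  · intro n hn
    simp only [Finset.mem_Icc, Finset.mem_filter] at hn
    exact Nat.div_mul_cancel hn.2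
  · intro m hm
    have key : z + ((m * b ^ l : ℕ) : ℝ) = (b:ℝ) ^ l * (w + m) := by
      push_cast
      rw [hw_def]
      field_simp
    rw [key, Real.mul_rpow (le_of_lt hbl) (by positivity)]
    have hexp : ((b:ℝ) ^ l) ^ (-α) = (b:ℝ) ^ (-(α * l)) := by
      rw [← Real.rpow_natCast (b:ℝ) l, ← Real.rpow_mul (le_of_lt hb0)]
      ring_nf
    rw [hexp]

lemma abel_sum (s F : ℕ → ℝ) (hs : s 0 = 0) (M : ℕ) :
    ∑ n ∈ Finset.Icc 1 M, s n * (F n - F (n + 1)) =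
      (∑ n ∈ Finset.Icc 1 M, (s n - s (n - 1)) * F n) - s M * F (M + 1) := by
  induction M with
  | zero => simp [hs]
  | succ M ih =>
    rw [Finset.sum_Icc_succ_top (by omega), Finset.sum_Icc_succ_top (by omega), ih]
    simp only [Nat.add_sub_cancel]
    ring

lemma coeff_eq (b p : ℕ) (hb : 2 ≤ b) (hp : 1 ≤ p) (n : ℕ) (h1 : 1 ≤ n) (h2 : n ≤ b ^ p) :
    (digitSum b (n % b ^ p) : ℤ) - digitSum b (n - 1) =
      (∑ l ∈ Finset.range p, if b ^ l ∣ n then (1:ℤ) else 0) -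
        b * ∑ l ∈ Finset.Icc 1 p, (if b ^ l ∣ n then (1:ℤ) else 0) := by
  have hbp : 0 < b ^ p := Nat.pow_pos (by omega)
  have hdiff : ∀ i : ℕ, ((n / b ^ (i + 1) : ℕ) : ℤ) =
      ((n - 1) / b ^ (i + 1) : ℕ) + (if b ^ (i + 1) ∣ n then (1:ℤ) else 0) := by
    intro i
    have h := Nat.succ_div (a := n - 1) (b := b ^ (i + 1))
    rw [show n - 1 + 1 = n by omega] at h
    rw [h]
    push_cast [apply_ite (Nat.cast : ℕ → ℤ)]
    ring
  have hIcc : ∑ l ∈ Finset.Icc 1 p, (if b ^ l ∣ n then (1:ℤ) else 0)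
      = ∑ i ∈ Finset.range p, (if b ^ (i + 1) ∣ n then (1:ℤ) else 0) := by
    rw [← Finset.Ico_add_one_right_eq_Icc, Finset.sum_Ico_eq_sum_range]
    refine Finset.sum_congr (by norm_num) fun i _ => by rw [add_comm]
  have hrange : ∑ l ∈ Finset.range p, (if b ^ l ∣ n then (1:ℤ) else 0)
      = 1 + ∑ i ∈ Finset.range (p - 1), (if b ^ (i + 1) ∣ n then (1:ℤ) else 0) := by
    rw [show p = (p - 1) + 1 by omega, Finset.sum_range_succ']
    simp [add_comm]
  rcases lt_or_eq_of_le h2 with hlt | heq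
  · -- case n < b ^ p
    have e1 := digitSum_int b p n hb hlt
    have e2 := digitSum_int b p (n - 1) hb (by omega)
    rw [Nat.mod_eq_of_lt hlt]
    rw [Nat.cast_sum] at e1 e2
    have hcast : ((n - 1 : ℕ) : ℤ) = (n : ℤ) - 1 := by omega
    rw [hcast] at e2
    have hsum : (∑ i ∈ Finset.range p, ((n / b ^ (i + 1) : ℕ) : ℤ))
        = (∑ i ∈ Finset.range p, (((n - 1) / b ^ (i + 1) : ℕ) : ℤ))
          + ∑ i ∈ Finset.range p, (if b ^ (i + 1) ∣ n then (1:ℤ) else 0) := by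
      rw [← Finset.sum_add_distrib]
      exact Finset.sum_congr rfl fun i _ => hdiff i
    have hppred : p - 1 + 1 = p := by omega
    have hnd : ¬ b ^ p ∣ n := fun hdvd => absurd (Nat.le_of_dvd (by omega) hdvd) (by omega)
    have htop : ∑ i ∈ Finset.range p, (if b ^ (i + 1) ∣ n then (1:ℤ) else 0)
        = ∑ i ∈ Finset.range (p - 1), (if b ^ (i + 1) ∣ n then (1:ℤ) else 0) := by
      rw [← hppred, Finset.sum_range_succ, hppred, if_neg hnd, add_zero]
    rw [hIcc, hrange, e1, e2]
    linear_combination (1 - (b:ℤ)) * hsum + htop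
  · -- case n = b ^ p
    subst heq
    rw [Nat.mod_self]
    have e2 := digitSum_int b p (b ^ p - 1) hb (by omega)
    rw [Nat.cast_sum] at e2
    have hdivN : ∀ i ∈ Finset.range p, (((b ^ p - 1) / b ^ (i + 1) : ℕ) : ℤ)
        = (b : ℤ) ^ (p - 1 - i) - 1 := by
      intro i hi
      simp only [Finset.mem_range] at hi
      have hdv : b ^ (i + 1) ∣ b ^ p := pow_dvd_pow b (by omega)
      have h := hdiff i
      rw [if_pos hdv] at h
      have hq : b ^ p / b ^ (i + 1) = b ^ (p - (i + 1)) := Nat.pow_div (by omega) (by omega)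
      rw [hq, show p - (i + 1) = p - 1 - i by omega, Nat.cast_pow] at h
      linarith
    have hsumN : (∑ i ∈ Finset.range p, (((b ^ p - 1) / b ^ (i + 1) : ℕ) : ℤ))
        = (∑ j ∈ Finset.range p, (b : ℤ) ^ j) - p := by
      rw [Finset.sum_congr rfl hdivN, Finset.sum_sub_distrib]
      simp only [Finset.sum_const, Finset.card_range, nsmul_eq_mul, mul_one]
      congr 1
      exact Finset.sum_range_reflect (fun j => (b : ℤ) ^ j) p
    have hgeom : (∑ j ∈ Finset.range p, (b : ℤ) ^ j) * ((b : ℤ) - 1) = (b : ℤ) ^ p - 1 :=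
      geom_sum_mul _ _
    have hχr : ∑ l ∈ Finset.range p, (if b ^ l ∣ b ^ p then (1:ℤ) else 0) = p := by
      rw [Finset.sum_congr rfl fun l hl =>
        if_pos (pow_dvd_pow b (le_of_lt (Finset.mem_range.1 hl)))]
      simp
    have hχI : ∑ l ∈ Finset.Icc 1 p, (if b ^ l ∣ b ^ p then (1:ℤ) else 0) = p := by
      rw [Finset.sum_congr rfl fun l hl => if_pos (pow_dvd_pow b (Finset.mem_Icc.1 hl).2)]
      simp
    rw [hχr, hχI]
    have hcast2 : ((b ^ p - 1 : ℕ) : ℤ) = (b : ℤ) ^ p - 1 := by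
      rw [Nat.cast_sub (by omega), Nat.cast_pow, Nat.cast_one]
    rw [hcast2, hsumN] at e2
    have h0 : digitSum b 0 = 0 := by simp [digitSum]
    rw [h0]
    push_cast
    linear_combination -e2 + hgeom

theorem stmt0 (b p : ℕ) (hb : 2 ≤ b) (hp : 1 ≤ p) (α z : ℝ) (hα : 1 < α) (hz : 0 ≤ z) :
    ∑ n ∈ Finset.Icc 1 (b ^ p - 1),
      (digitSum b n : ℝ) * ((z + n) ^ (-α) - (z + n + 1) ^ (-α)) =
    (∑ l ∈ Finset.range p, (b : ℝ) ^ (-(α * l)) *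
      (hurwitzZetaReal α (1 + z / b ^ l) - hurwitzZetaReal α (1 + (z + b ^ p) / b ^ l))) -
    ∑ l ∈ Finset.Icc 1 p, (b : ℝ) * (b : ℝ) ^ (-(α * l)) *
      (hurwitzZetaReal α (1 + z / b ^ l) - hurwitzZetaReal α (1 + (z + b ^ p) / b ^ l)) := by
  have hbp : 0 < b ^ p := Nat.pow_pos (by omega)
  set N := b ^ p with hN
  set F : ℕ → ℝ := fun n => (z + n) ^ (-α) with hF
  set s : ℕ → ℝ := fun n => (digitSum b n : ℝ) with hs_def
  set g : ℕ → ℝ := fun n => ((digitSum b (n % N) : ℝ) - digitSum b (n - 1)) * F n with hg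
  have h0 : digitSum b 0 = 0 := by simp [digitSum]
  -- LHS equals sum of g over Icc 1 N
  have hLHS : ∑ n ∈ Finset.Icc 1 (N - 1),
      (digitSum b n : ℝ) * ((z + n) ^ (-α) - (z + n + 1) ^ (-α))
      = ∑ n ∈ Finset.Icc 1 N, g n := by
    have step1 : ∑ n ∈ Finset.Icc 1 (N - 1),
        (digitSum b n : ℝ) * ((z + n) ^ (-α) - (z + n + 1) ^ (-α))
        = ∑ n ∈ Finset.Icc 1 (N - 1), s n * (F n - F (n + 1)) := by
      refine Finset.sum_congr rfl fun n _ => ?_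
      simp only [hs_def, hF]
      push_cast
      ring_nf
    have habel := abel_sum s F (by simp [hs_def, h0]) (N - 1)
    rw [show N - 1 + 1 = N by omega] at habel
    have hsplit : ∑ n ∈ Finset.Icc 1 N, g n = ∑ n ∈ Finset.Icc 1 (N - 1), g n + g N := by
      have h := Finset.sum_Icc_succ_top (a := 1) (b := N - 1) (by omega) g
      rw [show N - 1 + 1 = N by omega] at h
      exact h
    have hmid : ∑ n ∈ Finset.Icc 1 (N - 1), g n
        = ∑ n ∈ Finset.Icc 1 (N - 1), (s n - s (n - 1)) * F n := by
      refine Finset.sum_congr rfl fun n hn => ?_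
      simp only [Finset.mem_Icc] at hn
      have : n % N = n := Nat.mod_eq_of_lt (by omega)
      simp only [hg, hs_def, this]
    have hlast : g N = -(s (N - 1) * F N) := by
      simp only [hg, hs_def, Nat.mod_self, h0]
      push_cast
      ring
    rw [step1, habel, hsplit, hmid, hlast]
    ring
  rw [hLHS]
  -- RHS equals the same sum
  have hterm : ∀ l, l ≤ p → (b : ℝ) ^ (-(α * l)) *
      (hurwitzZetaReal α (1 + z / b ^ l) - hurwitzZetaReal α (1 + (z + b ^ p) / b ^ l))
      = ∑ n ∈ Finset.Icc 1 N, (if b ^ l ∣ n then F n else 0) := by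
    intro l hl
    rw [term_eq b p l hb hl α z hα hz, Finset.sum_filter]
  have hR1 : ∑ l ∈ Finset.range p, (b : ℝ) ^ (-(α * l)) *
      (hurwitzZetaReal α (1 + z / b ^ l) - hurwitzZetaReal α (1 + (z + b ^ p) / b ^ l))
      = ∑ n ∈ Finset.Icc 1 N, ∑ l ∈ Finset.range p, (if b ^ l ∣ n then F n else 0) := by
    rw [Finset.sum_comm]
    exact Finset.sum_congr rfl fun l hl =>
      hterm l (le_of_lt (Finset.mem_range.1 hl))
  have hR2 : ∑ l ∈ Finset.Icc 1 p, (b : ℝ) * (b : ℝ) ^ (-(α * l)) *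
      (hurwitzZetaReal α (1 + z / b ^ l) - hurwitzZetaReal α (1 + (z + b ^ p) / b ^ l))
      = ∑ n ∈ Finset.Icc 1 N, ∑ l ∈ Finset.Icc 1 p, (b : ℝ) * (if b ^ l ∣ n then F n else 0) := by
    rw [Finset.sum_comm]
    refine Finset.sum_congr rfl fun l hl => ?_
    rw [← Finset.mul_sum, ← hterm l (Finset.mem_Icc.1 hl).2]
    ring
  rw [hR1, hR2, ← Finset.sum_sub_distrib]
  refine Finset.sum_congr rfl fun n hn => ?_
  simp only [Finset.mem_Icc] at hn
  -- cast the coefficient identity to ℝ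
  have hc := coeff_eq b p hb hp n hn.1 hn.2
  have hcR : ((digitSum b (n % N) : ℝ) - digitSum b (n - 1))
      = (∑ l ∈ Finset.range p, if b ^ l ∣ n then (1:ℝ) else 0) -
        (b : ℝ) * ∑ l ∈ Finset.Icc 1 p, (if b ^ l ∣ n then (1:ℝ) else 0) := by
    have := congrArg (fun x : ℤ => (x : ℝ)) hc
    push_cast [apply_ite (fun x : ℤ => (x : ℝ))] at this
    exact_mod_cast this
  have h1 : ∑ l ∈ Finset.range p, (if b ^ l ∣ n then F n else 0)
      = (∑ l ∈ Finset.range p, if b ^ l ∣ n then (1:ℝ) else 0) * F n := by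
    rw [Finset.sum_mul]
    exact Finset.sum_congr rfl fun l _ => (boole_mul _ _).symm
  have h2 : ∑ l ∈ Finset.Icc 1 p, (b : ℝ) * (if b ^ l ∣ n then F n else 0)
      = (b : ℝ) * ((∑ l ∈ Finset.Icc 1 p, if b ^ l ∣ n then (1:ℝ) else 0) * F n) := by
    rw [← Finset.mul_sum, Finset.sum_mul]
    congr 1
    exact Finset.sum_congr rfl fun l _ => (boole_mul _ _).symm
  rw [h1, h2]
  simp only [hg]
  rw [hcR]
  ring
end

section
/- Let b ≥ 2 be an integer, let p ≥ 1 be an integer, and let z ≥ 0 be real. Then ∑_{n=1}^{b^p−1} s_b(n)/((z+n)(z+n+1)) = ∑_{l=0}^{p−1} b^{−l}·[ψ(1 + (z+b^p)/b^l) − ψ(1 + z/b^l)] − ∑_{l=1}^{p} b·b^{−l}·[ψ(1 + (z+b^p)/b^l) − ψ(1 + z/b^l)]. -/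
/-- The digamma function `ψ(x) = Γ'(x)/Γ(x)`. -/
noncomputable def digamma (x : ℝ) : ℝ := deriv Real.Gamma x / Real.Gamma x

lemma diffGamma {x : ℝ} (hx : 0 < x) : DifferentiableAt ℝ Real.Gamma x :=
  Real.differentiableAt_Gamma (fun m => by nlinarith [Nat.cast_nonneg (α := ℝ) m])

lemma gamma_deriv_rec (x : ℝ) (hx : 0 < x) :
    deriv Real.Gamma (x + 1) = Real.Gamma x + x * deriv Real.Gamma x := by
  have h1 : (fun y => Real.Gamma (y + 1)) =ᶠ[nhds x] fun y => y * Real.Gamma y := by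
    filter_upwards [eventually_gt_nhds hx] with y hy
    rw [Real.Gamma_add_one (ne_of_gt hy)]
  have h2 : deriv (fun y => Real.Gamma (y + 1)) x = deriv Real.Gamma (x + 1) := by
    rw [deriv_comp_add_const]
  rw [← h2, h1.deriv_eq, deriv_fun_mul differentiableAt_fun_id (diffGamma hx)]
  simp

lemma digamma_rec (x : ℝ) (hx : 0 < x) : digamma (x + 1) = digamma x + 1 / x := by
  have hg : Real.Gamma x ≠ 0 := ne_of_gt (Real.Gamma_pos_of_pos hx)
  unfold digamma
  rw [gamma_deriv_rec x hx, Real.Gamma_add_one (ne_of_gt hx)]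
  field_simp
  ring

lemma digamma_sum (y : ℝ) (hy : 0 < y) (K : ℕ) :
    digamma (y + K) = digamma y + ∑ m ∈ Finset.range K, 1 / (y + m) := by
  induction K with
  | zero => simp
  | succ K ih =>
    have h : y + (K + 1 : ℕ) = (y + K) + 1 := by push_cast; ring
    rw [h, digamma_rec _ (by positivity), ih, Finset.sum_range_succ]
    ring

lemma abel (c : ℕ) (hc : 0 < c) (f : ℕ → ℝ) (M : ℕ) :
    ∑ n ∈ Finset.Icc 1 M, (↑(n / c) : ℝ) * (f n - f (n + 1)) =
    (∑ m ∈ Finset.Icc 1 (M / c), f (m * c)) - ↑(M / c) * f (M + 1) := by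
  induction M with
  | zero => simp [Nat.div_eq_of_lt hc]
  | succ M ih =>
    rw [Finset.sum_Icc_succ_top (by omega : 1 ≤ M + 1), ih]
    by_cases h : c ∣ (M + 1)
    · have h1 : (M + 1) / c = M / c + 1 := by
        rw [Nat.succ_div, if_pos h]
      rw [h1, Finset.sum_Icc_succ_top (Nat.le_add_left 1 _)]
      have h2 : (M / c + 1) * c = M + 1 := by
        rw [← h1, Nat.div_mul_cancel h]
      rw [h2]; push_cast; ring
    · have h1 : (M + 1) / c = M / c := by
        rw [Nat.succ_div, if_neg h]; simp
      rw [h1]; push_cast; ring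

lemma digitSum_eq (b : ℕ) (hb : 2 ≤ b) : ∀ p n, n < b ^ p →
    (Nat.digits b n).sum = ∑ l ∈ Finset.range p, n / b ^ l % b := by
  intro p
  induction p with
  | zero => intro n hn; rw [pow_zero] at hn; interval_cases n; simp
  | succ p ih =>
    intro n hn
    rcases Nat.eq_zero_or_pos n with rfl | hn0
    · simp
    rw [Nat.digits_def' (by omega) hn0]
    simp only [List.sum_cons]
    have h1 : n / b < b ^ p := by
      rw [Nat.div_lt_iff_lt_mul (by omega)]
      calc n < b ^ (p+1) := hn
        _ = b ^ p * b := by ring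
    rw [ih _ h1, Finset.sum_range_succ']
    have he : ∀ k, n / b / b ^ k % b = n / b ^ (k + 1) % b := by
      intro k
      rw [Nat.div_div_eq_div_mul, ← pow_succ']
    simp only [he, pow_zero, Nat.div_one]
    ring

theorem stmt1 (b p : ℕ) (hb : 2 ≤ b) (hp : 1 ≤ p) (z : ℝ) (hz : 0 ≤ z) :
    ∑ n ∈ Finset.Icc 1 (b ^ p - 1),
      (digitSum b n : ℝ) / ((z + n) * (z + n + 1)) =
    (∑ l ∈ Finset.range p, ((b : ℝ) ^ l)⁻¹ *
      (digamma (1 + (z + b ^ p) / b ^ l) - digamma (1 + z / b ^ l))) -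
    ∑ l ∈ Finset.Icc 1 p, (b : ℝ) * ((b : ℝ) ^ l)⁻¹ *
      (digamma (1 + (z + b ^ p) / b ^ l) - digamma (1 + z / b ^ l)) := by
  have hbR : (1:ℝ) < b := by exact_mod_cast by omega
  have hN1 : 1 ≤ b ^ p := Nat.one_le_pow p b (by omega)
  set f : ℕ → ℝ := fun n => 1 / (z + n) with hf
  set Δ : ℕ → ℝ := fun l =>
    digamma (1 + (z + (b:ℝ) ^ p) / (b:ℝ) ^ l) - digamma (1 + z / (b:ℝ) ^ l) with hΔ
  -- Step C: evaluate the per-level sums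
  have hT : ∀ l, l ≤ p →
      ∑ n ∈ Finset.Icc 1 (b ^ p - 1), (↑(n / b ^ l) : ℝ) * (f n - f (n + 1)) =
      ((b:ℝ) ^ l)⁻¹ * Δ l - (b ^ (p - l) : ℕ) * f (b ^ p) := by
    intro l hl
    have hc : 0 < b ^ l := Nat.pow_pos (n := l) (by omega)
    have hcR : (0:ℝ) < (b:ℝ) ^ l := by positivity
    set K := b ^ (p - l) with hK
    have hK1 : 1 ≤ K := Nat.one_le_pow _ b (by omega)
    have hNK : b ^ p = K * b ^ l := by rw [hK, ← pow_add]; congr 1; omega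
    have hKR : (K : ℝ) * (b:ℝ) ^ l = (b:ℝ) ^ p := by
      push_cast [hK, ← pow_add]; congr 1; omega
    have habel := abel (b ^ l) hc f (b ^ p - 1)
    have hdiv : (b ^ p - 1) / b ^ l = K - 1 := by
      have h1 : b ^ p - 1 = (b ^ l - 1) + (K - 1) * b ^ l := by
        have h2 : (K - 1) * b ^ l = K * b ^ l - b ^ l := by rw [Nat.sub_one_mul]
        have h3 : b ^ l ≤ K * b ^ l := Nat.le_mul_of_pos_left _ hK1
        omega
      rw [h1, Nat.add_mul_div_right _ _ hc, Nat.div_eq_of_lt (by omega)]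
      omega
    have hsucc : b ^ p - 1 + 1 = b ^ p := by omega
    rw [hdiv, hsucc] at habel
    rw [habel]
    -- digamma evaluation
    have hy : (0:ℝ) < 1 + z / (b:ℝ) ^ l := by positivity
    have hds := digamma_sum (1 + z / (b:ℝ) ^ l) hy K
    have harg : (1 + z / (b:ℝ) ^ l) + (K:ℝ) = 1 + (z + (b:ℝ) ^ p) / (b:ℝ) ^ l := by
      field_simp
      linarith [hKR]
    have hΔsum : Δ l = ∑ m ∈ Finset.range K, 1 / (1 + z / (b:ℝ) ^ l + (m:ℝ)) := by
      rw [hΔ]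
      simp only
      rw [← harg, hds]
      ring
    have hterm : ∀ m : ℕ, 1 / (1 + z / (b:ℝ) ^ l + (m:ℝ)) = (b:ℝ) ^ l * f ((m + 1) * b ^ l) := by
      intro m
      have hpos : (0:ℝ) < z + ((m + 1) * b ^ l : ℕ) := by
        have : (1:ℝ) ≤ ((m + 1) * b ^ l : ℕ) := by
          exact_mod_cast Nat.one_le_iff_ne_zero.mpr (by positivity)
        linarith
      rw [hf]
      simp only
      push_cast
      have h0 : ((b:ℝ) ^ l) ≠ 0 := ne_of_gt hcR
      have hpos2 : (0:ℝ) < z + ((m:ℝ) + 1) * (b:ℝ) ^ l := by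
        nlinarith [hcR, Nat.cast_nonneg (α := ℝ) m]
      have hy2 : (0:ℝ) < 1 + z / (b:ℝ) ^ l + (m:ℝ) := by positivity
      rw [mul_one_div, div_eq_div_iff (ne_of_gt hy2) (ne_of_gt hpos2)]
      field_simp
      ring
    have hIcc : ∑ m ∈ Finset.Icc 1 K, f (m * b ^ l) =
        ((b:ℝ) ^ l)⁻¹ * Δ l := by
      rw [hΔsum, ← Finset.Ico_add_one_right_eq_Icc, Finset.sum_Ico_eq_sum_range]
      simp only [Nat.succ_sub_one, Nat.add_sub_cancel]
      rw [Finset.mul_sum]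
      refine Finset.sum_congr rfl fun m _ => ?_
      rw [hterm m, ← mul_assoc, inv_mul_cancel₀ (ne_of_gt hcR), one_mul, add_comm 1 m]
    have hsplit : ∑ m ∈ Finset.Icc 1 (K - 1), f (m * b ^ l) =
        (∑ m ∈ Finset.Icc 1 K, f (m * b ^ l)) - f (b ^ p) := by
      have h4 := Finset.sum_Icc_succ_top (Nat.le_add_left 1 (K - 1)) (fun m => f (m * b ^ l))
      rw [show K - 1 + 1 = K from by omega] at h4
      rw [h4, ← hNK]
      ring
    rw [hsplit, hIcc]
    have hKm1 : ((K - 1 : ℕ) : ℝ) = (K : ℝ) - 1 := by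
      push_cast [Nat.cast_sub hK1]; ring
    rw [hKm1]
    ring
  -- Step A+B: rewrite LHS
  have key1 : ∀ n ∈ Finset.Icc 1 (b ^ p - 1),
      (digitSum b n : ℝ) / ((z + n) * (z + n + 1)) =
      ∑ l ∈ Finset.range p, ((↑(n / b ^ l) : ℝ) - b * ↑(n / b ^ (l + 1))) * (f n - f (n + 1)) := by
    intro n hn
    rw [Finset.mem_Icc] at hn
    have hzn : (0:ℝ) < z + n := by
      have : (1:ℝ) ≤ (n:ℝ) := by exact_mod_cast hn.1
      linarith
    have hfd : f n - f (n + 1) = 1 / ((z + n) * (z + n + 1)) := by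
      rw [hf]; simp only; push_cast
      rw [div_sub_div _ _ (by positivity) (by positivity : z + ((n:ℝ)+1) ≠ 0)]
      rw [div_eq_div_iff (by positivity) (by positivity)]
      ring
    have hnlt : n < b ^ p := by omega
    have hmod : ∀ l, (↑(n / b ^ l % b) : ℝ) = ↑(n / b ^ l) - (b:ℝ) * ↑(n / b ^ (l + 1)) := by
      intro l
      have h1 : n / b ^ (l + 1) = n / b ^ l / b := by
        rw [Nat.div_div_eq_div_mul, pow_succ]
      have h2 : n / b ^ l % b + b * (n / b ^ l / b) = n / b ^ l := Nat.mod_add_div _ _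
      have h3 := congrArg (Nat.cast : ℕ → ℝ) h2
      push_cast at h3
      rw [h1]
      linarith
    rw [digitSum, digitSum_eq b hb p n hnlt, Nat.cast_sum, Finset.sum_div]
    refine Finset.sum_congr rfl fun l _ => ?_
    rw [hmod l, div_eq_mul_one_div, ← hfd]
  rw [Finset.sum_congr rfl key1, Finset.sum_comm]
  have key2 : ∀ l ∈ Finset.range p,
      ∑ n ∈ Finset.Icc 1 (b ^ p - 1),
        ((↑(n / b ^ l) : ℝ) - b * ↑(n / b ^ (l + 1))) * (f n - f (n + 1)) =
      ((b:ℝ) ^ l)⁻¹ * Δ l - (b:ℝ) * ((b:ℝ) ^ (l + 1))⁻¹ * Δ (l + 1) := by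
    intro l hl
    rw [Finset.mem_range] at hl
    have hstep : ∑ n ∈ Finset.Icc 1 (b ^ p - 1),
        ((↑(n / b ^ l) : ℝ) - b * ↑(n / b ^ (l + 1))) * (f n - f (n + 1)) =
        (∑ n ∈ Finset.Icc 1 (b ^ p - 1), (↑(n / b ^ l) : ℝ) * (f n - f (n + 1))) -
        (b:ℝ) * ∑ n ∈ Finset.Icc 1 (b ^ p - 1), (↑(n / b ^ (l + 1)) : ℝ) * (f n - f (n + 1)) := by
      rw [Finset.mul_sum, ← Finset.sum_sub_distrib]
      refine Finset.sum_congr rfl fun n _ => ?_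
      ring
    rw [hstep, hT l (by omega), hT (l + 1) (by omega)]
    have hcast : (↑(b ^ (p - l)) : ℝ) = (b:ℝ) * ↑(b ^ (p - (l + 1))) := by
      push_cast
      rw [← pow_succ']
      congr 1
      omega
    rw [hcast]
    ring
  rw [Finset.sum_congr rfl key2, Finset.sum_sub_distrib]
  congr 1
  rw [← Finset.Ico_add_one_right_eq_Icc, Finset.sum_Ico_eq_sum_range,
    show p + 1 - 1 = p from rfl]
  refine Finset.sum_congr rfl fun l _ => ?_
  rw [add_comm 1 l]
end

section
/- Let p ≥ 1 be an integer and let z ≥ 0 be real. Then ∑_{n=1}^{2^p−1} s_2(n)/((z+n)(z+n+1)) = ∑_{l=0}^{p−1} 2^{−(l+1)}·[ψ(z/2^{l+1} + 1) − ψ(z/2^{l+1} + 1/2) − ψ((z+2^p)/2^{l+1} + 1) + ψ((z+2^p)/2^{l+1} + 1/2)]. -/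
/-- Number of ones in the binary expansion of `n` (sum of base-2 digits). -/
def s2 (n : ℕ) : ℕ := (Nat.digits 2 n).sum

lemma digamma_add_one {x : ℝ} (hx : 0 < x) : digamma (x + 1) = digamma x + x⁻¹ := by
  have hne : ∀ m : ℕ, x ≠ -(m : ℝ) := by
    intro m h
    have h0 : (0:ℝ) ≤ m := Nat.cast_nonneg m
    rw [h] at hx
    linarith
  have hne' : ∀ m : ℕ, x + 1 ≠ -(m : ℝ) := by
    intro m h
    have h0 : (0:ℝ) ≤ m := Nat.cast_nonneg m
    linarith
  have hd : DifferentiableAt ℝ Real.Gamma x := Real.differentiableAt_Gamma hne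
  have hd1 : DifferentiableAt ℝ Real.Gamma (x + 1) := Real.differentiableAt_Gamma hne'
  have h1 : HasDerivAt (fun y : ℝ => Real.Gamma (y + 1)) (deriv Real.Gamma (x+1)) x := by
    simpa [Function.comp_def] using (hd1.hasDerivAt.comp x ((hasDerivAt_id x).add_const 1))
  have h2 : HasDerivAt (fun y : ℝ => Real.Gamma (y + 1))
      (Real.Gamma x + x * deriv Real.Gamma x) x := by
    have h3 : HasDerivAt (fun y : ℝ => y * Real.Gamma y)
        (1 * Real.Gamma x + x * deriv Real.Gamma x) x := (hasDerivAt_id x).mul hd.hasDerivAt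
    rw [one_mul] at h3
    apply h3.congr_of_eventuallyEq
    filter_upwards [eventually_gt_nhds hx] with y hy
    exact Real.Gamma_add_one hy.ne'
  have key : deriv Real.Gamma (x+1) = Real.Gamma x + x * deriv Real.Gamma x := h1.unique h2
  have hΓ : Real.Gamma x ≠ 0 := (Real.Gamma_pos_of_pos hx).ne'
  rw [digamma, digamma, key, Real.Gamma_add_one hx.ne']
  field_simp
  ring

lemma digamma_add_nat {x : ℝ} (hx : 0 < x) (n : ℕ) :
    digamma (x + n) = digamma x + ∑ k ∈ Finset.range n, (x + k)⁻¹ := by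
  induction n with
  | zero => simp
  | succ n ih =>
    have hxn : 0 < x + n := by positivity
    have h : x + (n+1 : ℕ) = (x + n) + 1 := by push_cast; ring
    rw [h, digamma_add_one hxn, ih, Finset.sum_range_succ]
    ring

lemma s2_rec {n : ℕ} (hn : 0 < n) : s2 n = n % 2 + s2 (n / 2) := by
  rw [s2, Nat.digits_def' (by norm_num) hn, List.sum_cons]; rfl

lemma s2_bits {p : ℕ} : ∀ {n : ℕ}, n < 2 ^ p → s2 n = ∑ l ∈ Finset.range p, n / 2 ^ l % 2 := by
  induction p with
  | zero =>
    intro n hn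
    interval_cases n
    simp [s2]
  | succ p ih =>
    intro n hn
    rcases Nat.eq_zero_or_pos n with rfl | hpos
    · simp [s2]
    · have h2 : n / 2 < 2 ^ p := by
        rw [Nat.div_lt_iff_lt_mul (by norm_num)]
        calc n < 2 ^ (p+1) := hn
          _ = 2 ^ p * 2 := by ring
      rw [s2_rec hpos, ih h2, Finset.sum_range_succ']
      simp only [pow_zero, Nat.div_one]
      rw [add_comm]
      congr 1
      apply Finset.sum_congr rfl
      intro l _
      rw [pow_succ, ← Nat.div_div_eq_div_mul, Nat.div_div_eq_div_mul, mul_comm,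
        Nat.div_div_eq_div_mul]

lemma sum_range_add' (f : ℕ → ℝ) (m n : ℕ) :
    ∑ i ∈ Finset.range (m + n), f i
      = ∑ i ∈ Finset.range m, f i + ∑ i ∈ Finset.range n, f (m + i) := by
  rw [Finset.range_eq_Ico, ← Finset.sum_Ico_consecutive f (Nat.zero_le m) (Nat.le_add_right m n)]
  congr 1
  all_goals simp [Finset.sum_Ico_eq_sum_range]

lemma sum_range_mul (t M : ℕ) (F : ℕ → ℝ) :
    ∑ n ∈ Finset.range (t * M), F n
      = ∑ k ∈ Finset.range M, ∑ r ∈ Finset.range t, F (t * k + r) := by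
  induction M with
  | zero => simp
  | succ M ih =>
    rw [Nat.mul_succ, sum_range_add' F (t*M) t, ih, Finset.sum_range_succ]

lemma innerTele (z : ℝ) (hz : 0 ≤ z) (l c : ℕ) :
    ∑ r ∈ Finset.range (2^(l+1)),
        (((2^(l+1)*c + r) / 2^l % 2 : ℕ):ℝ)
          * ((z + (2^(l+1)*c + r : ℕ))⁻¹ - (z + (2^(l+1)*c + r : ℕ) + 1)⁻¹)
    = (z + 2^(l+1)*(c:ℝ) + 2^l)⁻¹ - (z + 2^(l+1)*(c:ℝ) + 2^(l+1))⁻¹ := by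
  have hsp : (2:ℕ)^(l+1) = 2^l + 2^l := by rw [pow_succ]; ring
  have hsum := sum_range_add' (fun r => (((2^(l+1)*c + r) / 2^l % 2 : ℕ):ℝ)
          * ((z + (2^(l+1)*c + r : ℕ))⁻¹ - (z + (2^(l+1)*c + r : ℕ) + 1)⁻¹)) (2^l) (2^l)
  rw [← hsp] at hsum
  rw [hsum]
  have hz1 : ∀ r ∈ Finset.range (2^l),
      (((2^(l+1)*c + r) / 2^l % 2 : ℕ):ℝ)
          * ((z + (2^(l+1)*c + r : ℕ))⁻¹ - (z + (2^(l+1)*c + r : ℕ) + 1)⁻¹) = 0 := by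
    intro r hr
    have hr' : r < 2^l := Finset.mem_range.mp hr
    have hb : (2^(l+1)*c + r) / 2^l % 2 = 0 := by
      have : 2^(l+1)*c + r = 2^l * (2*c) + r := by ring
      rw [this, Nat.mul_add_div (by positivity), Nat.div_eq_of_lt hr']
      omega
    rw [hb]
    simp
  rw [Finset.sum_congr rfl hz1, Finset.sum_const_zero, zero_add]
  have hone : ∀ i ∈ Finset.range (2^l),
      (((2^(l+1)*c + (2^l + i)) / 2^l % 2 : ℕ):ℝ)
          * ((z + (2^(l+1)*c + (2^l + i) : ℕ))⁻¹ - (z + (2^(l+1)*c + (2^l + i) : ℕ) + 1)⁻¹)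
      = (fun i : ℕ => (z + 2^(l+1)*(c:ℝ) + 2^l + (i:ℝ))⁻¹) i
        - (fun i : ℕ => (z + 2^(l+1)*(c:ℝ) + 2^l + (i:ℝ))⁻¹) (i+1) := by
    intro i hi
    have hi' : i < 2^l := Finset.mem_range.mp hi
    have hb : (2^(l+1)*c + (2^l + i)) / 2^l % 2 = 1 := by
      have h : 2^(l+1)*c + (2^l + i) = 2^l * (2*c + 1) + i := by ring
      rw [h, Nat.mul_add_div (by positivity), Nat.div_eq_of_lt hi']
      omega
    rw [hb]
    simp only [Nat.cast_one, one_mul]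
    congr 1
    · push_cast; ring_nf
    · push_cast; ring_nf
  rw [Finset.sum_congr rfl hone, Finset.sum_range_sub']
  push_cast [pow_succ]
  ring_nf

theorem stmt3 (p : ℕ) (hp : 1 ≤ p) (z : ℝ) (hz : 0 ≤ z) :
    ∑ n ∈ Finset.Icc 1 (2 ^ p - 1),
      (s2 n : ℝ) / ((z + n) * (z + n + 1)) =
    ∑ l ∈ Finset.range p, ((2 : ℝ) ^ (l + 1))⁻¹ *
      (digamma (z / 2 ^ (l + 1) + 1) - digamma (z / 2 ^ (l + 1) + 1 / 2)
        - digamma ((z + 2 ^ p) / 2 ^ (l + 1) + 1)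
        + digamma ((z + 2 ^ p) / 2 ^ (l + 1) + 1 / 2)) := by
  have h2p : 0 < 2^p := by positivity
  -- LHS transformation
  have hIcc : Finset.Icc 1 (2^p - 1) = Finset.Ico 1 (2^p) := by
    rw [← Finset.Ico_add_one_right_eq_Icc]
    congr 1
    omega
  have lhs_eq : ∑ n ∈ Finset.Icc 1 (2 ^ p - 1), (s2 n : ℝ) / ((z + n) * (z + n + 1))
      = ∑ l ∈ Finset.range p, ∑ k ∈ Finset.range (2^(p-l-1)),
          ((z + 2^(l+1)*(k:ℝ) + 2^l)⁻¹ - (z + 2^(l+1)*(k:ℝ) + 2^(l+1))⁻¹) := by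
    rw [hIcc]
    have step1 : ∀ n ∈ Finset.Ico 1 (2^p),
        (s2 n : ℝ)/((z+n)*(z+n+1)) = (s2 n : ℝ) * ((z+(n:ℝ))⁻¹ - (z+(n:ℝ)+1)⁻¹) := by
      intro n hn
      have hn1 : (1:ℝ) ≤ n := by exact_mod_cast (Finset.mem_Ico.mp hn).1
      have ha : (0:ℝ) < z + n := by linarith
      have hb : (0:ℝ) < z + n + 1 := by linarith
      field_simp
      ring
    rw [Finset.sum_congr rfl step1]
    have ext0 : ∑ n ∈ Finset.Ico 1 (2^p), (s2 n:ℝ) * ((z+(n:ℝ))⁻¹ - (z+(n:ℝ)+1)⁻¹)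
        = ∑ n ∈ Finset.range (2^p), (s2 n:ℝ) * ((z+(n:ℝ))⁻¹ - (z+(n:ℝ)+1)⁻¹) := by
      rw [Finset.range_eq_Ico, Finset.sum_eq_sum_Ico_succ_bot h2p]
      simp [s2]
    rw [ext0]
    have hs2 : ∀ n ∈ Finset.range (2^p),
        (s2 n : ℝ) * ((z+(n:ℝ))⁻¹ - (z+(n:ℝ)+1)⁻¹)
        = ∑ l ∈ Finset.range p, ((n / 2^l % 2 : ℕ):ℝ) * ((z+(n:ℝ))⁻¹ - (z+(n:ℝ)+1)⁻¹) := by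
      intro n hn
      rw [s2_bits (Finset.mem_range.mp hn)]
      push_cast
      rw [Finset.sum_mul]
    rw [Finset.sum_congr rfl hs2, Finset.sum_comm]
    apply Finset.sum_congr rfl
    intro l hl
    have hl' : l < p := Finset.mem_range.mp hl
    have hsplit : 2^p = 2^(l+1) * 2^(p-l-1) := by
      rw [← pow_add]
      congr 1
      omega
    rw [hsplit, sum_range_mul]
    apply Finset.sum_congr rfl
    intro k hk
    exact innerTele z hz l k
  rw [lhs_eq]
  apply Finset.sum_congr rfl
  intro l hl
  have hl' : l < p := Finset.mem_range.mp hl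
  -- RHS per l
  have ht : (0:ℝ) < 2^(l+1) := by positivity
  have hB : 0 ≤ z / 2^(l+1) := div_nonneg hz ht.le
  set B : ℝ := z / 2^(l+1) with hBdef
  have hpow : (2:ℝ)^p = 2^(l+1) * (2^(p-l-1) : ℕ) := by
    push_cast
    rw [← pow_add]
    congr 1
    omega
  have hM : (z + 2^p)/(2:ℝ)^(l+1) = B + (2^(p-l-1) : ℕ) := by
    rw [hBdef, hpow]
    field_simp
  have e1 : (z + 2^p)/(2:ℝ)^(l+1) + 1 = (B + 1) + (2^(p-l-1) : ℕ) := by rw [hM]; ring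
  have e2 : (z + 2^p)/(2:ℝ)^(l+1) + 1/2 = (B + 1/2) + (2^(p-l-1) : ℕ) := by rw [hM]; ring
  rw [e1, e2, digamma_add_nat (by linarith : (0:ℝ) < B + 1),
    digamma_add_nat (by linarith : (0:ℝ) < B + 1/2)]
  rw [show digamma (B + 1) - digamma (B + 1/2)
        - (digamma (B + 1) + ∑ k ∈ Finset.range (2^(p-l-1)), (B + 1 + k)⁻¹)
        + (digamma (B + 1/2) + ∑ k ∈ Finset.range (2^(p-l-1)), (B + 1/2 + k)⁻¹)
      = ∑ k ∈ Finset.range (2^(p-l-1)), ((B + 1/2 + k)⁻¹ - (B + 1 + k)⁻¹) by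
    rw [Finset.sum_sub_distrib]; ring]
  rw [Finset.mul_sum]
  apply Finset.sum_congr rfl
  intro k hk
  have ha : (0:ℝ) < B + 1/2 + k := by
    have : (0:ℝ) ≤ k := Nat.cast_nonneg k
    linarith
  have hb : (0:ℝ) < B + 1 + k := by
    have : (0:ℝ) ≤ k := Nat.cast_nonneg k
    linarith
  have key1 : (2:ℝ)^(l+1) * (B + 1/2 + k) = z + 2^(l+1)*(k:ℝ) + 2^l := by
    have h2l : (2:ℝ)^(l+1) = 2^l * 2 := pow_succ 2 l
    rw [hBdef, h2l]
    field_simp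
    ring
  have key2 : (2:ℝ)^(l+1) * (B + 1 + k) = z + 2^(l+1)*(k:ℝ) + 2^(l+1) := by
    rw [hBdef]
    field_simp
    ring
  rw [mul_sub, ← mul_inv, ← mul_inv, key1, key2]
end

section
/- For every natural number N and every real x ≥ 0, J_{2N+1}(x) = (1/2)·J_N(x/2) + γ_N(x), where J_N(x) = ∑_{n=1}^{N} s_2(n)/((x+n)(x+n+1)) and γ_N(x) = ∑_{n=0}^{N} 1/((x+2n+1)(x+2n+2)). -/
/-- `J_N(x) = ∑_{n=1}^N s₂(n)/((x+n)(x+n+1))`. -/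
noncomputable def J (N : ℕ) (x : ℝ) : ℝ :=
  ∑ n ∈ Finset.Icc 1 N, (s2 n : ℝ) / ((x + n) * (x + n + 1))

/-- `γ_N(x) = ∑_{n=0}^N 1/((x+2n+1)(x+2n+2))`. -/
noncomputable def gammaAux (N : ℕ) (x : ℝ) : ℝ :=
  ∑ n ∈ Finset.range (N + 1), 1 / ((x + 2 * n + 1) * (x + 2 * n + 2))

lemma s2_two_mul (n : ℕ) (hn : 0 < n) : s2 (2 * n) = s2 n := by
  unfold s2
  rw [Nat.digits_def' (by norm_num : (1:ℕ) < 2) (by omega)]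
  simp

lemma s2_two_mul_add_one (n : ℕ) : s2 (2 * n + 1) = s2 n + 1 := by
  unfold s2
  rw [Nat.digits_def' (by norm_num : (1:ℕ) < 2) (by omega)]
  have h1 : (2 * n + 1) % 2 = 1 := by omega
  have h2 : (2 * n + 1) / 2 = n := by omega
  rw [h1, h2]
  simp [List.sum_cons, Nat.add_comm]

lemma J_succ (m : ℕ) (x : ℝ) :
    J (m + 1) x = J m x + (s2 (m + 1) : ℝ) / ((x + (m + 1)) * (x + (m + 1) + 1)) := by
  unfold J
  rw [Finset.sum_Icc_succ_top (by omega : 1 ≤ m + 1)]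
  push_cast
  ring

lemma gammaAux_succ (n : ℕ) (x : ℝ) :
    gammaAux (n + 1) x = gammaAux n x +
      1 / ((x + 2 * (n + 1) + 1) * (x + 2 * (n + 1) + 2)) := by
  unfold gammaAux
  rw [Finset.sum_range_succ]
  push_cast
  ring

lemma alg (s a : ℝ) (ha : 0 < a) :
    s / (a * (a + 1)) + (s + 1) / ((a + 1) * (a + 2)) =
      1 / 2 * (s / (a / 2 * (a / 2 + 1))) + 1 / ((a + 1) * (a + 2)) := by
  have h1 : a ≠ 0 := ne_of_gt ha
  have h2 : a + 1 ≠ 0 := by positivity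
  have h3 : a + 2 ≠ 0 := by positivity
  field_simp
  ring

theorem stmt4 (N : ℕ) (x : ℝ) (hx : 0 ≤ x) :
    J (2 * N + 1) x = (1 / 2) * J N (x / 2) + gammaAux N x := by
  induction N with
  | zero =>
    simp only [Nat.mul_zero, Nat.zero_add, J, gammaAux]
    have h1 : x + 1 ≠ 0 := by positivity
    have h2 : x + 2 ≠ 0 := by positivity
    norm_num [s2]
    exact Or.inl (by ring)
  | succ n ih =>
    have key : 2 * (n + 1) + 1 = (2 * n + 1) + 1 + 1 := by ring
    rw [key, J_succ, J_succ, ih, J_succ n]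
    have e1 : s2 (2 * n + 1 + 1) = s2 (n + 1) := by
      have : 2 * n + 1 + 1 = 2 * (n + 1) := by ring
      rw [this, s2_two_mul (n + 1) (by omega)]
    have e2 : s2 (2 * n + 1 + 1 + 1) = s2 (n + 1) + 1 := by
      have : 2 * n + 1 + 1 + 1 = 2 * (n + 1) + 1 := by ring
      rw [this, s2_two_mul_add_one]
    rw [e1, e2]
    rw [gammaAux_succ]
    push_cast
    have ha : (0:ℝ) < x + 2 * n + 2 := by positivity
    have halg := alg ((s2 (n + 1) : ℝ)) (x + 2 * n + 2) ha
    linear_combination halg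
end

section
/- Let b ≥ 2 be an integer and let z > −1 be real. Then the infinite product ∏_{n=1}^{∞} ((1 + z/n)/(1 + z/(n+1)))^{s_b(n)} converges and equals b^{zb/(b−1)} · ∏_{l=0}^{∞} Γ(1 + z/b^{l+1})^b / Γ(1 + z/b^l), where Γ denotes the Gamma function. -/
open Filter Finset Real Topology

/- log difference bound -/
lemma log_sub_log_le {a c ε : ℝ} (hε : 0 < ε) (ha : ε ≤ a) (hc : ε ≤ c) (h : c ≤ a) :
    Real.log a - Real.log c ≤ (a - c) / ε := by
  have hc0 : 0 < c := lt_of_lt_of_le hε hc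
  have ha0 : 0 < a := lt_of_lt_of_le hε ha
  have h1 : Real.log a - Real.log c = Real.log (a / c) := (Real.log_div ha0.ne' hc0.ne').symm
  rw [h1]
  have h2 : Real.log (a / c) ≤ a / c - 1 := Real.log_le_sub_one_of_pos (by positivity)
  have h3 : a / c - 1 = (a - c) / c := by field_simp
  have h4 : (a - c) / c ≤ (a - c) / ε := by
    apply div_le_div_of_nonneg_left (by linarith) hε hc
  linarith

lemma abs_log_sub_log_le {a c ε : ℝ} (hε : 0 < ε) (ha : ε ≤ a) (hc : ε ≤ c) :
    |Real.log a - Real.log c| ≤ |a - c| / ε := by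
  rcases le_total c a with h | h
  · rw [abs_of_nonneg (sub_nonneg.2 (Real.log_le_log (lt_of_lt_of_le hε hc) h)),
      abs_of_nonneg (by linarith : (0:ℝ) ≤ a - c)]
    exact log_sub_log_le hε ha hc h
  · rw [abs_sub_comm, abs_sub_comm a c,
      abs_of_nonneg (sub_nonneg.2 (Real.log_le_log (lt_of_lt_of_le hε ha) h)),
      abs_of_nonneg (by linarith : (0:ℝ) ≤ c - a)]
    exact log_sub_log_le hε hc ha h

/- digit sum as sum of base-b digits via division -/
lemma digitSum_eq_sum (b : ℕ) (hb : 2 ≤ b) :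
    ∀ (K n : ℕ), n < b ^ K → digitSum b n = ∑ l ∈ range K, n / b ^ l % b := by
  intro K
  induction K with
  | zero => intro n hn; simp at hn; simp [hn, digitSum]
  | succ K ih =>
    intro n hn
    rcases Nat.eq_zero_or_pos n with rfl | hn0
    · simp [digitSum]
    have hdig : Nat.digits b n = n % b :: Nat.digits b (n / b) :=
      Nat.digits_def' (by omega) hn0
    have hdiv : n / b < b ^ K := by
      rw [Nat.div_lt_iff_lt_mul (by omega)]
      calc n < b ^ (K+1) := hn
      _ = b ^ K * b := pow_succ b K
    have ihd := ih (n / b) hdiv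
    have hds : digitSum b n = n % b + digitSum b (n / b) := by
      simp [digitSum, hdig]
    rw [hds, ihd, Finset.sum_range_succ']
    have e : ∀ l, n / b / b ^ l = n / b ^ (l + 1) := by
      intro l; rw [Nat.div_div_eq_div_mul, ← pow_succ']
    simp only [e, pow_zero, Nat.div_one]
    ring

/- the real-valued digit difference identity -/
lemma digit_diff (b : ℕ) (hb : 2 ≤ b) {K m : ℕ} (hm : 1 ≤ m) (h : m < b ^ K) :
    (digitSum b m : ℝ) - (digitSum b (m - 1) : ℝ) =
      ∑ l ∈ range K, ((if b ^ l ∣ m then (1:ℝ) else 0) - b * (if b ^ (l+1) ∣ m then (1:ℝ) else 0)) := by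
  have h1 : m - 1 < b ^ K := by omega
  rw [digitSum_eq_sum b hb K m h, digitSum_eq_sum b hb K (m-1) h1]
  rw [Nat.cast_sum, Nat.cast_sum, ← Finset.sum_sub_distrib]
  apply Finset.sum_congr rfl
  intro l _
  have key : ∀ j : ℕ, ((j / b ^ l % b : ℕ) : ℝ) = ((j / b ^ l : ℕ) : ℝ) - b * ((j / b ^ (l+1) : ℕ) : ℝ) := by
    intro j
    have e1 : j / b ^ l / b = j / b ^ (l+1) := by
      rw [Nat.div_div_eq_div_mul, ← pow_succ]
    have hle : b * (j / b ^ l / b) ≤ j / b ^ l := Nat.mul_div_le _ _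
    have e2 : j / b ^ l % b = j / b ^ l - b * (j / b ^ l / b) := by
      have := Nat.div_add_mod (j / b ^ l) b
      omega
    rw [← e1, e2, Nat.cast_sub hle]
    push_cast
    ring
  rw [key m, key (m-1)]
  obtain ⟨k, rfl⟩ : ∃ k, m = k + 1 := ⟨m - 1, by omega⟩
  simp only [Nat.add_sub_cancel]
  have succd : ∀ d : ℕ, (((k+1) / d : ℕ) : ℝ) = ((k / d : ℕ) : ℝ) + (if d ∣ (k+1) then (1:ℝ) else 0) := by
    intro d
    rw [Nat.succ_div]
    split <;> push_cast <;> ring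
  rw [succd (b ^ l), succd (b ^ (l+1))]
  ring

/- sum of 1/(m+1)^2 bound -/
lemma sum_inv_sq_le (M : ℕ) : ∑ m ∈ range M, (1:ℝ) / (m+1)^2 ≤ 2 := by
  suffices h : ∑ m ∈ range M, (1:ℝ) / (m+1)^2 ≤ 2 - 2/((M:ℝ)+1) by
    have : (0:ℝ) ≤ 2/((M:ℝ)+1) := by positivity
    linarith
  induction M with
  | zero => norm_num
  | succ M ih =>
    rw [Finset.sum_range_succ]
    have h1 : (1:ℝ) / ((M:ℝ)+1)^2 ≤ 2/((M:ℝ)+1) - 2/((M:ℝ)+1+1) := by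
      have e : (2:ℝ)/((M:ℝ)+1) - 2/((M:ℝ)+1+1) = 2/(((M:ℝ)+1)*((M:ℝ)+1+1)) := by
        field_simp
        ring
      rw [e, div_le_div_iff₀ (by positivity) (by positivity)]
      nlinarith [Nat.cast_nonneg (α := ℝ) M]
    push_cast at *
    linarith

/- sum over range (M*b) of f (m / b) -/
lemma sum_range_mul_div (b M : ℕ) (hb : 0 < b) (f : ℕ → ℝ) :
    ∑ m ∈ range (M * b), f (m / b) = b * ∑ m ∈ range M, f m := by
  induction M with
  | zero => simp
  | succ M ih =>
    have h2 : (M + 1) * b = M * b + b := by ring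
    rw [h2, Finset.sum_range_add, ih, Finset.sum_range_succ]
    have e : ∀ i ∈ range b, f ((M * b + i) / b) = f M := by
      intro i hi
      simp only [Finset.mem_range] at hi
      congr 1
      rw [Nat.mul_comm, Nat.mul_add_div hb, Nat.div_eq_of_lt hi]
      omega
    rw [Finset.sum_congr rfl e, Finset.sum_const, Finset.card_range]
    push_cast
    ring

/- crude digit-sum bound -/
lemma digitSum_le_sqrt (b : ℕ) (hb : 2 ≤ b) {n : ℕ} (hn : 1 ≤ n) :
    (digitSum b n : ℝ) ≤ (5 * b) * Real.sqrt n := by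
  have hb1 : 1 < b := hb
  have hn0 : n ≠ 0 := by omega
  -- digit sum ≤ (b-1) * (log b n + 1)
  have h1 : digitSum b n ≤ (Nat.log b n + 1) * (b - 1) := by
    have := List.sum_le_card_nsmul (Nat.digits b n) (b - 1)
      (fun x hx => by have := Nat.digits_lt_base hb1 hx; omega)
    rw [Nat.digits_len b n hb1 hn0] at this
    simpa [digitSum, smul_eq_mul] using this
  -- Nat.log bound: (L : ℝ) ≤ 2 sqrt n / log 2
  set L := Nat.log b n with hL
  have h2 : (2:ℝ) ^ L ≤ n := by
    have hbl : b ^ L ≤ n := Nat.pow_log_le_self b hn0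
    calc (2:ℝ) ^ L ≤ (b:ℝ) ^ L := by
          apply pow_le_pow_left₀ (by norm_num)
          exact_mod_cast hb
    _ ≤ n := by exact_mod_cast hbl
  have hlog2 : (0.6931471803 : ℝ) < Real.log 2 := Real.log_two_gt_d9
  have h3 : (L : ℝ) * Real.log 2 ≤ Real.log n := by
    calc (L : ℝ) * Real.log 2 = Real.log ((2:ℝ) ^ L) := (Real.log_pow 2 L).symm
    _ ≤ Real.log n := Real.log_le_log (by positivity) h2
  have hsq : Real.sqrt n * Real.sqrt n = (n : ℝ) := Real.mul_self_sqrt (by positivity)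
  have hs1 : (1:ℝ) ≤ Real.sqrt n := by
    rw [show (1:ℝ) = Real.sqrt 1 by simp]
    exact Real.sqrt_le_sqrt (by exact_mod_cast hn)
  have h4 : Real.log n ≤ 2 * Real.sqrt n := by
    have hsn : Real.sqrt n ≠ 0 := by linarith
    have : Real.log n = 2 * Real.log (Real.sqrt n) := by
      conv_lhs => rw [← hsq]
      rw [Real.log_mul hsn hsn]
      ring
    rw [this]
    have := Real.log_le_sub_one_of_pos (x := Real.sqrt n) (by linarith)
    linarith
  have h5 : (L : ℝ) ≤ 4 * Real.sqrt n := by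
    have hL2 : (L:ℝ) * Real.log 2 ≤ 2 * Real.sqrt n := le_trans h3 h4
    nlinarith [Nat.cast_nonneg (α := ℝ) L, Real.sqrt_nonneg (n:ℝ)]
  have h6 : (digitSum b n : ℝ) ≤ ((L : ℝ) + 1) * b := by
    have := h1
    have hcast : (digitSum b n : ℝ) ≤ ((L + 1) * (b - 1) : ℕ) := by exact_mod_cast this
    apply le_trans hcast
    push_cast [Nat.cast_sub (by omega : 1 ≤ b)]
    nlinarith [Nat.cast_nonneg (α := ℝ) L, (by exact_mod_cast hb : (2:ℝ) ≤ (b:ℝ))]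
  calc (digitSum b n : ℝ) ≤ ((L : ℝ) + 1) * b := h6
  _ ≤ (4 * Real.sqrt n + Real.sqrt n) * b := by
      have hb0 : (0:ℝ) ≤ b := by positivity
      nlinarith
  _ = (5 * b) * Real.sqrt n := by ring

noncomputable def Fs (M : ℕ) (w : ℝ) : ℝ := ∑ m ∈ range M, Real.log (1 + w/(m+1))

lemma one_add_div_pos {w : ℝ} (hw : -1 < w) (x : ℝ) (hx : 1 ≤ x) : 0 < 1 + w / x := by
  have hx0 : 0 < x := by linarith
  rcases le_or_gt 0 w with h | h
  · have : 0 ≤ w / x := by positivity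
    linarith
  · have h1 : -1 ≤ w := le_of_lt hw
    have : -1 ≤ w / x := by
      rw [neg_le, ← neg_div]
      rw [div_le_one hx0]
      linarith
    rcases eq_or_lt_of_le this with h2 | h2
    · exfalso
      have : w = -x := by
        field_simp at h2
        linarith
      nlinarith
    · linarith

lemma tendsto_Fs_sub_log {w : ℝ} (hw : -1 < w) :
    Tendsto (fun M : ℕ => Fs M w - w * Real.log M) atTop
      (𝓝 (- Real.log (Real.Gamma (1 + w)))) := by
  have h1w : 0 < 1 + w := by linarith
  have hΓ : 0 < Real.Gamma (1 + w) := Real.Gamma_pos_of_pos h1w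
  have hpos : ∀ m : ℕ, 0 < 1 + w / (m + 1) := fun m =>
    one_add_div_pos hw _ (by exact_mod_cast Nat.one_le_iff_ne_zero.2 (Nat.succ_ne_zero m))
  -- Step 1: identify exp of the sequence
  have key : ∀ M : ℕ, 1 ≤ M → Fs M w - w * Real.log M =
      Real.log ((M : ℝ) / (((M:ℝ) + 1 + w) * Real.GammaSeq (1+w) M)) := by
    intro M hM
    have hM0 : (0:ℝ) < M := by exact_mod_cast hM
    set P : ℝ := ∏ j ∈ range M, (1 + w + j) with hPdef
    have hPpos : 0 < P := Finset.prod_pos fun j _ => by positivity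
    have hfac : (0:ℝ) < (M.factorial : ℝ) := by exact_mod_cast M.factorial_pos
    have hprod : ∏ m ∈ range M, (1 + w/(m+1)) = P / M.factorial := by
      have e1 : ∀ m ∈ range M, (1 + w/((m:ℝ)+1)) = (1 + w + m) / (m + 1) := by
        intro m _
        field_simp
        ring
      rw [Finset.prod_congr rfl e1, Finset.prod_div_distrib]
      congr 1
      rw [← Finset.prod_range_add_one_eq_factorial M]
      push_cast
      rfl
    have hGS : Real.GammaSeq (1+w) M =
        (M:ℝ) * (M:ℝ) ^ w * M.factorial / (P * (1 + w + M)) := by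
      rw [Real.GammaSeq, Finset.prod_range_succ, ← hPdef]
      rw [show (1:ℝ) + w + (M:ℕ) = 1 + w + M by push_cast; ring]
      rw [Real.rpow_add hM0, Real.rpow_one]
    have hexpF : Real.exp (Fs M w) = P / M.factorial := by
      rw [Fs, Real.exp_sum, ← hprod]
      exact Finset.prod_congr rfl fun m _ => Real.exp_log (hpos m)
    have hexpw : Real.exp (w * Real.log M) = (M:ℝ) ^ w := by
      rw [Real.rpow_def_of_pos hM0, mul_comm]
    have hrw : Real.exp (Fs M w - w * Real.log M) =
        (M : ℝ) / (((M:ℝ) + 1 + w) * Real.GammaSeq (1+w) M) := by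
      rw [Real.exp_sub, hexpF, hexpw, div_div]
      have hMw : (0:ℝ) < (M:ℝ) ^ w := Real.rpow_pos_of_pos hM0 w
      have h1wM : (0:ℝ) < 1 + w + M := by positivity
      have hGSpos : 0 < Real.GammaSeq (1+w) M := by
        rw [hGS]; positivity
      rw [div_eq_div_iff (by positivity) (mul_pos (show (0:ℝ) < (M:ℝ)+1+w by linarith) hGSpos).ne', hGS]
      field_simp
      ring
    rw [← hrw, Real.log_exp]
  -- Step 2: the RHS tends to log (Γ⁻¹) = - log Γ
  have ht1 : Tendsto (fun M : ℕ => (M:ℝ) / ((M:ℝ) + 1 + w)) atTop (𝓝 1) := by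
    have hden : Tendsto (fun M : ℕ => (M:ℝ) + 1 + w) atTop atTop := by
      apply tendsto_atTop_add_const_right
      apply tendsto_atTop_add_const_right
      exact tendsto_natCast_atTop_atTop
    have h0 : Tendsto (fun M : ℕ => (1 + w) / ((M:ℝ) + 1 + w)) atTop (𝓝 0) :=
      Tendsto.div_atTop tendsto_const_nhds hden
    have heq : ∀ M : ℕ, (M:ℝ) / ((M:ℝ) + 1 + w) = 1 - (1 + w) / ((M:ℝ) + 1 + w) := by
      intro M
      have : (0:ℝ) < (M:ℝ) + 1 + w := by
        have : (0:ℝ) ≤ (M:ℝ) := Nat.cast_nonneg M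
        linarith
      field_simp
      ring
    simp only [heq]
    have := (tendsto_const_nhds (x := (1:ℝ)) (f := atTop (α := ℕ))).sub h0
    simpa using this
  have ht2 : Tendsto (fun M : ℕ => (M:ℝ) / (((M:ℝ) + 1 + w) * Real.GammaSeq (1+w) M)) atTop
      (𝓝 (Real.Gamma (1+w))⁻¹) := by
    have := ht1.mul ((Real.GammaSeq_tendsto_Gamma (1+w)).inv₀ hΓ.ne')
    rw [one_mul] at this
    apply this.congr
    intro M
    simp only [division_def, mul_inv]
    ring
  have ht3 : Tendsto (fun M : ℕ =>
      Real.log ((M : ℝ) / (((M:ℝ) + 1 + w) * Real.GammaSeq (1+w) M))) atTop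
      (𝓝 (- Real.log (Real.Gamma (1 + w)))) := by
    have hcont : ContinuousAt Real.log (Real.Gamma (1+w))⁻¹ :=
      Real.continuousAt_log (by positivity)
    have := hcont.tendsto.comp ht2
    rw [Real.log_inv] at this
    exact this
  apply ht3.congr'
  filter_upwards [eventually_ge_atTop 1] with M hM
  exact (key M hM).symm

noncomputable def Dd (b j : ℕ) (w : ℝ) : ℝ := Fs (b^(j+1)) w - b * Fs (b^j) (w/b)

lemma div_gt_neg_one {w : ℝ} (hw : -1 < w) {x : ℝ} (hx : 1 ≤ x) : -1 < w / x := by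
  have := one_add_div_pos hw x hx
  linarith

lemma tendsto_Dd {b : ℕ} (hb : 2 ≤ b) {w : ℝ} (hw : -1 < w) :
    Tendsto (fun j : ℕ => Dd b j w) atTop
      (𝓝 (b * Real.log (Real.Gamma (1 + w/b)) - Real.log (Real.Gamma (1+w)) + w * Real.log b)) := by
  have hb1 : (1:ℝ) ≤ (b:ℝ) := by exact_mod_cast (by omega : 1 ≤ b)
  have hwb : -1 < w / b := div_gt_neg_one hw hb1
  have hpow : Tendsto (fun j : ℕ => b ^ j) atTop atTop :=
    tendsto_pow_atTop_atTop_of_one_lt (by omega)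
  have G1 : Tendsto (fun j : ℕ => Fs (b^(j+1)) w - w * ((j:ℝ)+1) * Real.log b) atTop
      (𝓝 (-Real.log (Real.Gamma (1+w)))) := by
    have h := (tendsto_Fs_sub_log hw).comp (hpow.comp (tendsto_add_atTop_nat 1))
    apply h.congr
    intro j
    simp only [Function.comp_apply]
    rw [Nat.cast_pow, Real.log_pow]
    push_cast
    ring
  have G2 : Tendsto (fun j : ℕ => Fs (b^j) (w/b) - (w/b) * (j:ℝ) * Real.log b) atTop
      (𝓝 (-Real.log (Real.Gamma (1+w/b)))) := by
    have h := (tendsto_Fs_sub_log hwb).comp hpow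
    apply h.congr
    intro j
    simp only [Function.comp_apply]
    rw [Nat.cast_pow, Real.log_pow]
    ring
  have hfin := (G1.sub (G2.const_mul (b:ℝ))).add_const (w * Real.log b)
  have hval : (-(Real.log (Real.Gamma (1+w))) - (b:ℝ) * (-(Real.log (Real.Gamma (1+w/b))))) + w*Real.log b
      = (b:ℝ) * Real.log (Real.Gamma (1 + w/b)) - Real.log (Real.Gamma (1+w)) + w * Real.log b := by
    ring
  rw [hval] at hfin
  apply hfin.congr
  intro j
  unfold Dd
  have hbne : (b:ℝ) ≠ 0 := by positivity
  field_simp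
  ring

lemma Dd_bound {b : ℕ} (hb : 2 ≤ b) {w ε : ℝ} (hε : 0 < ε)
    (hεw : ∀ m : ℕ, 1 ≤ m → ε ≤ 1 + w / m) (j : ℕ) :
    |Dd b j w| ≤ 2 * ((b:ℝ)-1) * |w| / ε := by
  have hb0 : 0 < b := by omega
  -- rewrite the second sum
  have e1 : (b:ℝ) * Fs (b^j) (w/b) =
      ∑ m ∈ range (b^(j+1)), Real.log (1 + w / (b * ((m/b : ℕ) + 1))) := by
    have e2 : Fs (b^j) (w/b) = ∑ m' ∈ range (b^j), Real.log (1 + w/((b:ℝ)*((m':ℝ)+1))) := by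
      apply Finset.sum_congr rfl
      intro m' _
      rw [div_div]
    rw [e2, ← sum_range_mul_div b (b^j) hb0 (fun m' => Real.log (1 + w/((b:ℝ)*((m':ℝ)+1)))), ← pow_succ]
  have e3 : Dd b j w = ∑ m ∈ range (b^(j+1)),
      (Real.log (1 + w/((m:ℝ)+1)) - Real.log (1 + w / (b * ((m/b : ℕ) + 1)))) := by
    rw [Dd, e1, Fs, ← Finset.sum_sub_distrib]
  rw [e3]
  have hterm : ∀ m : ℕ,
      |Real.log (1 + w/((m:ℝ)+1)) - Real.log (1 + w / (b * ((m/b : ℕ) + 1)))|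
        ≤ (((b:ℝ)-1) * |w| / ε) * (1/((m:ℝ)+1)^2) := by
    intro m
    set q : ℕ := m / b with hq
    have h1 : b * q ≤ m := Nat.mul_div_le m b
    have h2 : m < b * q + b := by
      have hd := Nat.div_add_mod m b
      have hm := Nat.mod_lt m hb0
      rw [← hq] at hd
      linarith
    have e4 : b * (q + 1) = b * q + b := by ring
    have hcast : ((b * (q+1) : ℕ) : ℝ) = (b:ℝ) * ((q:ℝ)+1) := by push_cast; ring
    set Br : ℝ := (b:ℝ) * ((q:ℝ)+1) with hBr
    have hBr1 : (m:ℝ) + 1 ≤ Br := by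
      rw [← hcast]; exact_mod_cast (show m + 1 ≤ b * (q+1) by rw [e4]; exact h2)
    have hBr2 : Br ≤ (m:ℝ) + (b:ℝ) := by
      rw [← hcast]
      have h7 : b * (q+1) ≤ m + b := by rw [e4]; exact Nat.add_le_add_right h1 b
      exact_mod_cast h7
    have hm0 : (0:ℝ) < (m:ℝ) + 1 := by positivity
    have hBr0 : (0:ℝ) < Br := lt_of_lt_of_le hm0 hBr1
    have hεa : ε ≤ 1 + w / ((m:ℝ)+1) := by
      have := hεw (m+1) (by omega)
      push_cast at this
      exact this
    have hεc : ε ≤ 1 + w / Br := by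
      have := hεw (b * (q+1)) (Nat.mul_pos hb0 q.succ_pos)
      rwa [hcast] at this
    refine le_trans (abs_log_sub_log_le hε hεa hεc) ?_
    have hbR : (2:ℝ) ≤ (b:ℝ) := by exact_mod_cast hb
    have habc : |(1 + w/((m:ℝ)+1)) - (1 + w/Br)| ≤ ((b:ℝ)-1) * |w| / ((m:ℝ)+1)^2 := by
      have e5 : (1 + w/((m:ℝ)+1)) - (1 + w/Br) = w * ((Br - ((m:ℝ)+1))/(((m:ℝ)+1)*Br)) := by
        field_simp
        ring
      rw [e5, abs_mul]
      have h6 : |(Br - ((m:ℝ)+1))/(((m:ℝ)+1)*Br)| ≤ ((b:ℝ)-1)/((m:ℝ)+1)^2 := by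
        rw [abs_of_nonneg (div_nonneg (by linarith) (by positivity))]
        apply div_le_div₀ (by linarith) (by linarith) (by positivity) (by nlinarith)
      calc |w| * |(Br - ((m:ℝ)+1))/(((m:ℝ)+1)*Br)| ≤ |w| * (((b:ℝ)-1)/((m:ℝ)+1)^2) :=
            mul_le_mul_of_nonneg_left h6 (abs_nonneg w)
      _ = ((b:ℝ)-1) * |w| / ((m:ℝ)+1)^2 := by ring
    have e6 : (((b:ℝ)-1) * |w| / ((m:ℝ)+1)^2) / ε = (((b:ℝ)-1) * |w| / ε) * (1/((m:ℝ)+1)^2) := by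
      ring
    rw [← e6]
    gcongr
  have hbR : (2:ℝ) ≤ (b:ℝ) := by exact_mod_cast hb
  have hC : 0 ≤ ((b:ℝ)-1) * |w| / ε :=
    div_nonneg (mul_nonneg (by linarith) (abs_nonneg w)) hε.le
  refine le_trans (Finset.abs_sum_le_sum_abs _ _) ?_
  refine le_trans (Finset.sum_le_sum (fun m _ => hterm m)) ?_
  rw [← Finset.mul_sum]
  calc (((b:ℝ)-1) * |w| / ε) * ∑ m ∈ range (b^(j+1)), (1:ℝ)/((m:ℝ)+1)^2
      ≤ (((b:ℝ)-1) * |w| / ε) * 2 := by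
        apply mul_le_mul_of_nonneg_left _ hC
        exact_mod_cast sum_inv_sq_le (b^(j+1))
  _ = 2 * ((b:ℝ)-1) * |w| / ε := by ring

lemma hasProd_exp {g : ℕ → ℝ} {a : ℝ} (h : HasSum g a) :
    HasProd (fun n => Real.exp (g n)) (Real.exp a) := by
  have h2 := (Real.continuous_exp.tendsto a).comp h
  apply h2.congr
  intro s
  simp [Function.comp, Real.exp_sum]

lemma abel_sum_s9 (c : ℕ → ℝ) (t : ℕ → ℝ) (N : ℕ) :
    ∑ n ∈ range N, c (n+1) * (t (n+1) - t (n+2)) =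
      (∑ n ∈ range N, (c (n+1) - c n) * t (n+1)) + c 0 * t 1 - c N * t (N+1) := by
  induction N with
  | zero => simp
  | succ N ih =>
    rw [Finset.sum_range_succ, Finset.sum_range_succ (f := fun n => (c (n+1) - c n) * t (n+1)), ih]
    ring

lemma sum_multiples (d N : ℕ) (t : ℕ → ℝ) :
    ∑ n ∈ range N, (if d ∣ (n+1) then t (n+1) else 0) = ∑ m ∈ range (N / d), t ((m+1) * d) := by
  induction N with
  | zero => simp
  | succ N ih =>
    rw [Finset.sum_range_succ, ih, Nat.succ_div]
    by_cases h : d ∣ (N+1)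
    · rw [if_pos h, if_pos h, Finset.sum_range_succ]
      have h1 : (N+1)/d = N/d + 1 := by rw [Nat.succ_div, if_pos h]
      have e : (N/d + 1) * d = N + 1 := by rw [← h1, Nat.div_mul_cancel h]
      rw [e]
    · rw [if_neg h, if_neg h]
      simp

lemma summable_sqrt_div_sq : Summable (fun n : ℕ => Real.sqrt ((n:ℝ)+1) / ((n:ℝ)+1)^2) := by
  have h1 : Summable (fun n : ℕ => 1/((n:ℝ)) ^ ((3:ℝ)/2)) :=
    Real.summable_one_div_nat_rpow.2 (by norm_num)
  have h2 := (summable_nat_add_iff 1).2 h1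
  apply h2.congr
  intro n
  have hx : (0:ℝ) < (n:ℝ)+1 := by positivity
  push_cast
  rw [Real.sqrt_eq_rpow, show ((n:ℝ)+1)^2 = ((n:ℝ)+1)^((2:ℝ)) by
      rw [← Real.rpow_natCast ((n:ℝ)+1) 2]; norm_num,
    ← Real.rpow_sub hx, one_div, ← Real.rpow_neg hx.le]
  norm_num

lemma summable_logGamma {b : ℕ} (hb : 2 ≤ b) {z : ℝ} :
    Summable (fun l : ℕ => Real.log (Real.Gamma (1 + z / (b:ℝ)^l))) := by
  have hbR : (2:ℝ) ≤ (b:ℝ) := by exact_mod_cast hb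
  set φ : ℝ → ℝ := fun x => Real.log (Real.Gamma (1+x)) with hφ
  have hΓd : DifferentiableAt ℝ Real.Gamma 1 := by
    apply Real.differentiableAt_Gamma
    intro m
    have : (0:ℝ) ≤ (m:ℝ) := Nat.cast_nonneg m
    intro hcon
    linarith
  have h1 : DifferentiableAt ℝ (fun x : ℝ => Real.Gamma (1+x)) 0 := by
    have h0 : DifferentiableAt ℝ (fun x : ℝ => (1:ℝ) + x) 0 := differentiableAt_id.const_add 1
    have h5 := DifferentiableAt.comp (𝕜 := ℝ) 0
      (show DifferentiableAt ℝ Real.Gamma ((fun x : ℝ => 1+x) 0) by simpa using hΓd) h0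
    exact h5
  have hne : Real.Gamma (1 + (0:ℝ)) ≠ 0 := by
    norm_num [Real.Gamma_one]
  have hdiff : DifferentiableAt ℝ φ 0 := DifferentiableAt.log h1 hne
  have hder : HasDerivAt φ (deriv φ 0) 0 := hdiff.hasDerivAt
  have hlit := hasDerivAt_iff_isLittleO.1 hder
  have hφ0 : φ 0 = 0 := by simp [hφ, Real.Gamma_one]
  set c : ℝ := deriv φ 0 with hc
  have hbound : ∀ᶠ x : ℝ in 𝓝 0, ‖φ x - x • c‖ ≤ 1 * ‖x‖ := by
    have := hlit.def one_pos
    simpa [hφ0] using this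
  have htend : Tendsto (fun l : ℕ => z / (b:ℝ)^l) atTop (𝓝 0) := by
    have hr : Tendsto (fun l : ℕ => ((b:ℝ)⁻¹)^l) atTop (𝓝 0) :=
      tendsto_pow_atTop_nhds_zero_of_lt_one (by positivity)
        (inv_lt_one_of_one_lt₀ (by linarith))
    have := hr.const_mul z
    rw [mul_zero] at this
    apply this.congr
    intro l
    rw [inv_pow, ← div_eq_mul_inv]
  have hev : ∀ᶠ l : ℕ in atTop, ‖φ (z / (b:ℝ)^l)‖ ≤ ((1 + |c|) * |z|) * ((b:ℝ)⁻¹)^l := by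
    filter_upwards [htend.eventually hbound] with l hl
    have h2 : |φ (z / (b:ℝ)^l) - z / (b:ℝ)^l * c| ≤ |z| / (b:ℝ)^l := by simpa using hl
    have h3 : |φ (z / (b:ℝ)^l)| ≤ |z| / (b:ℝ)^l + |z / (b:ℝ)^l * c| := by
      have h4 := abs_add_le (φ (z / (b:ℝ)^l) - z / (b:ℝ)^l * c) (z / (b:ℝ)^l * c)
      simp only [sub_add_cancel] at h4
      linarith
    rw [Real.norm_eq_abs]
    have hx2 : |z / (b:ℝ)^l * c| = (|z| / (b:ℝ)^l) * |c| := by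
      rw [abs_mul, abs_div, abs_of_nonneg (by positivity : (0:ℝ) ≤ (b:ℝ)^l)]
    calc |φ (z / (b:ℝ)^l)| ≤ |z| / (b:ℝ)^l + |z / (b:ℝ)^l * c| := h3
    _ = (1 + |c|) * (|z| / (b:ℝ)^l) := by rw [hx2]; ring
    _ = ((1 + |c|) * |z|) * ((b:ℝ)⁻¹)^l := by rw [inv_pow, div_eq_mul_inv]; ring
  apply Summable.of_norm_bounded_eventually (g := fun l => ((1 + |c|) * |z|) * ((b:ℝ)⁻¹)^l)
  · apply Summable.mul_left
    apply summable_geometric_of_lt_one (by positivity) (inv_lt_one_of_one_lt₀ (by linarith))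
  · rwa [Nat.cofinite_eq_atTop]

noncomputable def tt (z : ℝ) (n : ℕ) : ℝ := Real.log (1 + z / n)

noncomputable def Wf (b : ℕ) (z : ℝ) (K l : ℕ) : ℝ :=
  ∑ m ∈ range (b^K / b^l), tt z ((m+1) * b^l)

noncomputable def vf (b : ℕ) (z : ℝ) (K l : ℕ) : ℝ := Wf b z K l - b * Wf b z K (l+1)

noncomputable def vvf (b : ℕ) (z : ℝ) (K l : ℕ) : ℝ := if l ≤ K then vf b z K l else 0

lemma Wf_eq_Fs {b : ℕ} (hb : 2 ≤ b) (z : ℝ) {K l : ℕ} (hl : l ≤ K) :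
    Wf b z K l = Fs (b^(K-l)) (z / (b:ℝ)^l) := by
  rw [Wf, Fs, Nat.pow_div hl (by omega)]
  apply Finset.sum_congr rfl
  intro m _
  rw [tt]
  congr 1
  have hcast : (((m+1) * b^l : ℕ) : ℝ) = ((m:ℝ)+1) * (b:ℝ)^l := by push_cast; ring
  rw [hcast, div_div, mul_comm ((b:ℝ)^l) _]

lemma vf_eq_Dd {b : ℕ} (hb : 2 ≤ b) (z : ℝ) {K l : ℕ} (hl : l + 1 ≤ K) :
    vf b z K l = Dd b (K - l - 1) (z / (b:ℝ)^l) := by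
  obtain ⟨j, rfl⟩ : ∃ j, K = l + 1 + j := ⟨K - l - 1, by omega⟩
  rw [vf, Dd, Wf_eq_Fs hb z (by omega : l ≤ l + 1 + j), Wf_eq_Fs hb z hl]
  have e1 : l + 1 + j - l = j + 1 := by omega
  have e2 : l + 1 + j - (l+1) = j := by omega
  have e3 : l + 1 + j - l - 1 = j := by omega
  have e4 : z / (b:ℝ)^(l+1) = (z / (b:ℝ)^l) / b := by
    rw [div_div, ← pow_succ]
  simp only [e1, e2, e3, Nat.add_sub_cancel, e4]

lemma vf_diag {b : ℕ} (hb : 2 ≤ b) (z : ℝ) (K : ℕ) :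
    vf b z K K = Real.log (1 + z / (b:ℝ)^K) := by
  have h1 : b^K / b^K = 1 := Nat.div_self (by positivity)
  have h2 : b^K / b^(K+1) = 0 := Nat.div_eq_of_lt (Nat.pow_lt_pow_succ hb)
  rw [vf, Wf, Wf, h1, h2]
  simp only [Finset.range_zero, Finset.sum_empty, mul_zero, sub_zero, Finset.sum_range_one]
  rw [tt]
  congr 2
  push_cast
  ring

lemma Q_eq_sum_vf {b : ℕ} (hb : 2 ≤ b) (z : ℝ) (K : ℕ) :
    ∑ n ∈ range (b^K), ((digitSum b (n+1) : ℝ) - digitSum b n) * tt z (n+1)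
      = ∑ l ∈ range (K+1), vf b z K l := by
  have hstep : ∀ n ∈ range (b^K),
      ((digitSum b (n+1) : ℝ) - digitSum b n) * tt z (n+1)
        = ∑ l ∈ range (K+1), ((if b^l ∣ (n+1) then (1:ℝ) else 0)
            - b * (if b^(l+1) ∣ (n+1) then (1:ℝ) else 0)) * tt z (n+1) := by
    intro n hn
    rw [← Finset.sum_mul]
    congr 1
    have hlt : n + 1 < b^(K+1) := by
      have h1 : n < b^K := Finset.mem_range.1 hn
      have h2 : b^K < b^(K+1) := Nat.pow_lt_pow_succ hb
      omega
    have hd := digit_diff b hb (show 1 ≤ n+1 by omega) hlt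
    simpa using hd
  rw [Finset.sum_congr rfl hstep, Finset.sum_comm]
  apply Finset.sum_congr rfl
  intro l _
  rw [vf]
  have e : ∀ n ∈ range (b^K),
      ((if b^l ∣ (n+1) then (1:ℝ) else 0) - b * (if b^(l+1) ∣ (n+1) then (1:ℝ) else 0)) * tt z (n+1)
        = (if b^l ∣ (n+1) then tt z (n+1) else 0)
            - b * (if b^(l+1) ∣ (n+1) then tt z (n+1) else 0) := by
    intro n _
    by_cases h1 : b^l ∣ (n+1) <;> by_cases h2 : b^(l+1) ∣ (n+1) <;> simp [h1, h2] <;> ring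
  rw [Finset.sum_congr rfl e, Finset.sum_sub_distrib, ← Finset.mul_sum,
    sum_multiples, sum_multiples]
  rfl

theorem stmt9 (b : ℕ) (hb : 2 ≤ b) (z : ℝ) (hz : -1 < z) :
    HasProd
      (fun n : ℕ =>
        ((1 + z / (n + 1)) / (1 + z / (n + 2))) ^ digitSum b (n + 1))
      ((b : ℝ) ^ (z * b / ((b : ℝ) - 1)) *
        ∏' l : ℕ, Real.Gamma (1 + z / b ^ (l + 1)) ^ b / Real.Gamma (1 + z / b ^ l)) := by
  have hbR : (2:ℝ) ≤ (b:ℝ) := by exact_mod_cast hb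
  have hb0 : (0:ℝ) < b := by linarith
  set ε : ℝ := min 1 (1+z) with hεdef
  have hε : 0 < ε := lt_min one_pos (by linarith)
  have hε1 : ε ≤ 1 := min_le_left _ _
  have hεm : ∀ m : ℕ, 1 ≤ m → ε ≤ 1 + z / m := by
    intro m hm
    have hm1 : (1:ℝ) ≤ (m:ℝ) := by exact_mod_cast hm
    rcases le_or_gt 0 z with h | h
    · have h2 : 0 ≤ z/(m:ℝ) := by positivity
      linarith [min_le_left (1:ℝ) (1+z)]
    · have h1 : z ≤ z / m := by
        rw [le_div_iff₀ (by linarith)]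
        nlinarith
      calc ε ≤ 1 + z := min_le_right _ _
      _ ≤ 1 + z/m := by linarith
  have hεpow : ∀ l : ℕ, ε ≤ 1 + z / (b:ℝ)^l := by
    intro l
    have h1 := hεm (b^l) (Nat.one_le_iff_ne_zero.2 (by positivity))
    have hc : ((b^l : ℕ):ℝ) = (b:ℝ)^l := by push_cast; rfl
    rwa [hc] at h1
  have hεn1 : ∀ n : ℕ, ε ≤ 1 + z / ((n:ℝ)+1) := by
    intro n
    have h1 := hεm (n+1) (by omega)
    push_cast at h1
    exact h1
  have hεn2 : ∀ n : ℕ, ε ≤ 1 + z / ((n:ℝ)+2) := by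
    intro n
    have h1 := hεm (n+2) (by omega)
    push_cast at h1
    exact h1
  set g : ℕ → ℝ := fun n => (digitSum b (n+1) : ℝ) * (tt z (n+1) - tt z (n+2)) with hgdef
  have htt1 : ∀ n : ℕ, tt z (n+1) = Real.log (1 + z/((n:ℝ)+1)) := by
    intro n; rw [tt]; push_cast; ring_nf
  have htt2 : ∀ n : ℕ, tt z (n+2) = Real.log (1 + z/((n:ℝ)+2)) := by
    intro n; rw [tt]; push_cast; ring_nf
  have hgexp : ∀ n : ℕ, Real.exp (g n)
      = ((1 + z / ((n:ℝ) + 1)) / (1 + z / ((n:ℝ) + 2))) ^ digitSum b (n+1) := by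
    intro n
    have hp1 : (0:ℝ) < 1 + z/((n:ℝ)+1) := lt_of_lt_of_le hε (hεn1 n)
    have hp2 : (0:ℝ) < 1 + z/((n:ℝ)+2) := lt_of_lt_of_le hε (hεn2 n)
    rw [hgdef]
    simp only []
    rw [Real.exp_nat_mul, htt1, htt2, Real.exp_sub, Real.exp_log hp1, Real.exp_log hp2]
  have httb : ∀ n : ℕ, |tt z (n+1) - tt z (n+2)| ≤ |z| / (ε * ((n:ℝ)+1)^2) := by
    intro n
    rw [htt1, htt2]
    refine le_trans (abs_log_sub_log_le hε (hεn1 n) (hεn2 n)) ?_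
    have e : (1+z/((n:ℝ)+1)) - (1+z/((n:ℝ)+2)) = z / (((n:ℝ)+1)*((n:ℝ)+2)) := by
      field_simp
      ring
    rw [e, abs_div, abs_of_nonneg (by positivity : (0:ℝ) ≤ ((n:ℝ)+1)*((n:ℝ)+2)), div_div]
    apply div_le_div_of_nonneg_left (abs_nonneg z) (by positivity)
    nlinarith [Nat.cast_nonneg (α := ℝ) n, hε.le, hε1]
  have hsb : ∀ n : ℕ, (digitSum b (n+1) : ℝ) ≤ 5*(b:ℝ)*Real.sqrt ((n:ℝ)+1) := by
    intro n
    have h1 := digitSum_le_sqrt b hb (show 1 ≤ n+1 by omega)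
    push_cast at h1 ⊢
    linarith
  have hgb : ∀ n : ℕ, ‖g n‖ ≤ (5*(b:ℝ)*|z|/ε) * (Real.sqrt ((n:ℝ)+1) / ((n:ℝ)+1)^2) := by
    intro n
    rw [Real.norm_eq_abs, hgdef]
    simp only []
    rw [abs_mul, Nat.abs_cast]
    calc (digitSum b (n+1):ℝ) * |tt z (n+1) - tt z (n+2)|
        ≤ (5*(b:ℝ)*Real.sqrt ((n:ℝ)+1)) * (|z| / (ε * ((n:ℝ)+1)^2)) := by
          apply mul_le_mul (hsb n) (httb n) (abs_nonneg _) (by positivity)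
    _ = (5*(b:ℝ)*|z|/ε) * (Real.sqrt ((n:ℝ)+1) / ((n:ℝ)+1)^2) := by
          field_simp
  have hgsummable : Summable g :=
    Summable.of_norm_bounded (summable_sqrt_div_sq.mul_left _) hgb
  set S : ℝ := ∑' n, g n with hSdef
  have hS : HasSum g S := hgsummable.hasSum
  -- Abel summation and remainder
  have hc0 : (digitSum b 0 : ℝ) = 0 := by simp [digitSum]
  have hsqrtT : Tendsto (fun N : ℕ => Real.sqrt N) atTop atTop := by
    apply tendsto_atTop_atTop.2
    intro C
    refine ⟨⌈C⌉₊^2, fun n hn => ?_⟩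
    have h1 : ((⌈C⌉₊:ℝ))^2 ≤ (n:ℝ) := by exact_mod_cast hn
    calc C ≤ (⌈C⌉₊ : ℝ) := Nat.le_ceil C
    _ = Real.sqrt (((⌈C⌉₊:ℝ))^2) := (Real.sqrt_sq (by positivity)).symm
    _ ≤ Real.sqrt n := Real.sqrt_le_sqrt h1
  have hrem : Tendsto (fun N : ℕ => (digitSum b N : ℝ) * tt z (N+1)) atTop (𝓝 0) := by
    apply squeeze_zero_norm' (a := fun N : ℕ => (5*(b:ℝ)*|z|/ε) / Real.sqrt N)
    · filter_upwards [eventually_ge_atTop 1] with N hN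
      have hs1 : (1:ℝ) ≤ Real.sqrt N := by
        rw [show (1:ℝ) = Real.sqrt 1 by simp]
        apply Real.sqrt_le_sqrt
        exact_mod_cast hN
      have hts : |tt z (N+1)| ≤ |z| / (ε * ((N:ℝ)+1)) := by
        rw [htt1]
        have h1 := abs_log_sub_log_le hε (hεn1 N) hε1
        rw [Real.log_one, sub_zero] at h1
        refine le_trans h1 ?_
        rw [show (1+z/((N:ℝ)+1)) - 1 = z/((N:ℝ)+1) by ring, abs_div,
          abs_of_nonneg (by positivity : (0:ℝ) ≤ (N:ℝ)+1), div_div]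
        apply div_le_div_of_nonneg_left (abs_nonneg z) (by positivity)
        nlinarith [Nat.cast_nonneg (α := ℝ) N, hε.le, hε1]
      have hsN : (digitSum b N : ℝ) ≤ 5*(b:ℝ)*Real.sqrt N := by
        have h1 := digitSum_le_sqrt b hb hN
        linarith
      rw [Real.norm_eq_abs, abs_mul, Nat.abs_cast]
      have hNc : (0:ℝ) < (N:ℝ) := by exact_mod_cast hN
      calc (digitSum b N : ℝ) * |tt z (N+1)|
          ≤ (5*(b:ℝ)*Real.sqrt N) * (|z| / (ε * ((N:ℝ)+1))) := by
            apply mul_le_mul hsN hts (abs_nonneg _) (by positivity)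
      _ = (5*(b:ℝ)*|z|/ε) * (Real.sqrt N/((N:ℝ)+1)) := by
            field_simp
      _ ≤ (5*(b:ℝ)*|z|/ε) * (1/Real.sqrt N) := by
            apply mul_le_mul_of_nonneg_left _ (by positivity)
            rw [div_le_div_iff₀ (by positivity) (by positivity)]
            have hss : Real.sqrt N * Real.sqrt N = (N:ℝ) := Real.mul_self_sqrt hNc.le
            nlinarith
      _ = (5*(b:ℝ)*|z|/ε) / Real.sqrt N := by
            rw [mul_one_div]
    · exact Tendsto.div_atTop tendsto_const_nhds hsqrtT
  have hQS : Tendsto (fun N => ∑ n ∈ range N,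
      ((digitSum b (n+1) : ℝ) - digitSum b n) * tt z (n+1)) atTop (𝓝 S) := by
    have h1 : Tendsto (fun N => (∑ n ∈ range N, g n) + (digitSum b N : ℝ) * tt z (N+1))
        atTop (𝓝 (S + 0)) := hS.tendsto_sum_nat.add hrem
    rw [add_zero] at h1
    apply h1.congr
    intro N
    have h2 := abel_sum_s9 (fun n => (digitSum b n : ℝ)) (tt z) N
    rw [hgdef]
    simp only []
    rw [h2, hc0]
    ring
  have hQsub : Tendsto (fun K => ∑ n ∈ range (b^K),
      ((digitSum b (n+1) : ℝ) - digitSum b n) * tt z (n+1)) atTop (𝓝 S) :=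
    hQS.comp (tendsto_pow_atTop_atTop_of_one_lt hb)
  -- identify with tsum of vvf
  have hQv : ∀ K, ∑ n ∈ range (b^K), ((digitSum b (n+1) : ℝ) - digitSum b n) * tt z (n+1)
      = ∑' l, vvf b z K l := by
    intro K
    rw [Q_eq_sum_vf hb z K, tsum_eq_sum (s := range (K+1))
      (fun l hl => by rw [vvf, if_neg (by simp at hl; omega)])]
    apply Finset.sum_congr rfl
    intro l hl
    rw [vvf, if_pos (by simp at hl; omega)]
  -- dominated convergence
  set γ : ℕ → ℝ := fun l => Real.log (Real.Gamma (1 + z/(b:ℝ)^l)) with hγdef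
  set dd : ℕ → ℝ := fun l => (b:ℝ) * γ (l+1) - γ l + (z/(b:ℝ)^l) * Real.log b with hddef
  have hpoint : ∀ l : ℕ, Tendsto (fun K => vvf b z K l) atTop (𝓝 (dd l)) := by
    intro l
    have hw : -1 < z / (b:ℝ)^l := div_gt_neg_one hz (one_le_pow₀ (by linarith))
    have hD := tendsto_Dd hb hw
    have hcomp := hD.comp (tendsto_sub_atTop_nat (l+1))
    have hval : (b:ℝ) * Real.log (Real.Gamma (1 + (z/(b:ℝ)^l)/b))
        - Real.log (Real.Gamma (1+z/(b:ℝ)^l)) + (z/(b:ℝ)^l) * Real.log b = dd l := by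
      rw [hddef]
      have e : (z/(b:ℝ)^l)/b = z/(b:ℝ)^(l+1) := by rw [div_div, ← pow_succ]
      rw [e]
    rw [hval] at hcomp
    apply hcomp.congr'
    filter_upwards [eventually_ge_atTop (l+1)] with K hK
    simp only [Function.comp_apply]
    rw [vvf, if_pos (by omega), vf_eq_Dd hb z hK]
    congr 1
  have hdom : ∀ K : ℕ, ∀ l : ℕ, ‖vvf b z K l‖ ≤ (2*((b:ℝ)-1)*|z|/ε) * ((b:ℝ)⁻¹)^l := by
    intro K l
    have habs : |z/(b:ℝ)^l| = |z| * ((b:ℝ)⁻¹)^l := by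
      rw [abs_div, abs_of_nonneg (by positivity : (0:ℝ) ≤ (b:ℝ)^l), inv_pow, div_eq_mul_inv]
    rw [Real.norm_eq_abs]
    rcases lt_trichotomy l K with h | h | h
    · rw [vvf, if_pos h.le, vf_eq_Dd hb z (by omega)]
      have hεw : ∀ m : ℕ, 1 ≤ m → ε ≤ 1 + (z/(b:ℝ)^l)/m := by
        intro m hm
        have h1 := hεm (b^l * m) (Nat.one_le_iff_ne_zero.2 (by positivity))
        have hc : ((b^l * m : ℕ):ℝ) = (b:ℝ)^l * (m:ℝ) := by push_cast; ring
        rw [hc] at h1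
        rwa [div_div]
      refine le_trans (Dd_bound hb hε hεw _) ?_
      rw [habs]
      apply le_of_eq
      ring
    · subst h
      rw [vvf, if_pos le_rfl, vf_diag hb z]
      have h1 := abs_log_sub_log_le hε (hεpow l) hε1
      rw [Real.log_one, sub_zero] at h1
      refine le_trans h1 ?_
      rw [show (1 + z/(b:ℝ)^l) - 1 = z/(b:ℝ)^l by ring, habs]
      have h3 : (1:ℝ) ≤ 2*((b:ℝ)-1) := by linarith
      have h4 : (0:ℝ) ≤ |z| * ((b:ℝ)⁻¹)^l / ε := by positivity
      calc |z| * ((b:ℝ)⁻¹)^l / ε = 1 * (|z| * ((b:ℝ)⁻¹)^l / ε) := by ring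
      _ ≤ (2*((b:ℝ)-1)) * (|z| * ((b:ℝ)⁻¹)^l / ε) := mul_le_mul_of_nonneg_right h3 h4
      _ = (2*((b:ℝ)-1)*|z|/ε) * ((b:ℝ)⁻¹)^l := by ring
    · rw [vvf, if_neg (by omega)]
      simp only [abs_zero]
      apply mul_nonneg (div_nonneg (by nlinarith [abs_nonneg z]) hε.le) (by positivity)
  have hbsum : Summable (fun l : ℕ => (2*((b:ℝ)-1)*|z|/ε) * ((b:ℝ)⁻¹)^l) :=
    (summable_geometric_of_lt_one (by positivity)
      (inv_lt_one_of_one_lt₀ (by linarith))).mul_left _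
  have htsum := tendsto_tsum_of_dominated_convergence hbsum hpoint (Eventually.of_forall hdom)
  have hSval : S = ∑' l, dd l := by
    refine tendsto_nhds_unique hQsub (htsum.congr (fun K => (hQv K).symm))
  -- compute the sum of dd
  have hγs : Summable γ := summable_logGamma hb
  have hγ1 : Summable (fun l => γ (l+1)) := (summable_nat_add_iff 1).2 hγs
  have hH : HasSum (fun l => (b:ℝ) * γ (l+1) - γ l)
      ((b:ℝ) * (∑' l, γ (l+1)) - ∑' l, γ l) := (hγ1.hasSum.mul_left _).sub hγs.hasSum
  set H : ℝ := (b:ℝ) * (∑' l, γ (l+1)) - ∑' l, γ l with hHdef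
  have hA : HasSum (fun l : ℕ => (z/(b:ℝ)^l) * Real.log b)
      ((z * b/((b:ℝ)-1)) * Real.log b) := by
    have h1 : HasSum (fun l : ℕ => ((b:ℝ)⁻¹)^l) ((1 - (b:ℝ)⁻¹)⁻¹) :=
      hasSum_geometric_of_lt_one (by positivity) (inv_lt_one_of_one_lt₀ (by linarith))
    have h2 := h1.mul_left (z * Real.log b)
    have heq : (fun l : ℕ => (z * Real.log b) * ((b:ℝ)⁻¹)^l)
        = fun l : ℕ => (z/(b:ℝ)^l) * Real.log b := by
      funext l
      rw [inv_pow, div_eq_mul_inv]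
      ring
    rw [heq] at h2
    have hval : (z * Real.log b) * ((1 - (b:ℝ)⁻¹)⁻¹) = (z * b/((b:ℝ)-1)) * Real.log b := by
      have hbne : (b:ℝ) ≠ 0 := by linarith
      have hb1 : (1:ℝ) - (b:ℝ)⁻¹ ≠ 0 := by
        have h5 : (b:ℝ)⁻¹ < 1 := inv_lt_one_of_one_lt₀ (by linarith)
        linarith
      have hbm1 : (b:ℝ) - 1 ≠ 0 := by linarith
      field_simp
    rw [← hval]
    exact h2
  have hdd : HasSum dd (H + (z * b/((b:ℝ)-1)) * Real.log b) := hH.add hA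
  have hSfinal : S = (z * b/((b:ℝ)-1)) * Real.log b + H := by
    rw [hSval, hdd.tsum_eq]
    ring
  -- Gamma product
  have hΓpos : ∀ l : ℕ, 0 < Real.Gamma (1 + z/(b:ℝ)^l) :=
    fun l => Real.Gamma_pos_of_pos (lt_of_lt_of_le hε (hεpow l))
  have hGprod : HasProd (fun l : ℕ =>
      Real.Gamma (1 + z/(b:ℝ)^(l+1))^b / Real.Gamma (1 + z/(b:ℝ)^l)) (Real.exp H) := by
    have h1 := hasProd_exp hH
    have e : (fun l : ℕ => Real.exp ((b:ℝ) * γ (l+1) - γ l))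
        = fun l : ℕ => Real.Gamma (1 + z/(b:ℝ)^(l+1))^b / Real.Gamma (1 + z/(b:ℝ)^l) := by
      funext l
      rw [Real.exp_sub, Real.exp_nat_mul, hγdef]
      simp only []
      rw [Real.exp_log (hΓpos (l+1)), Real.exp_log (hΓpos l)]
    rw [e] at h1
    exact h1
  -- conclusion
  have hfprod : HasProd (fun n => Real.exp (g n)) (Real.exp S) := hasProd_exp hS
  have hfun : (fun n : ℕ => Real.exp (g n))
      = fun n : ℕ => ((1 + z / ((n:ℝ) + 1)) / (1 + z / ((n:ℝ) + 2))) ^ digitSum b (n+1) :=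
    funext hgexp
  rw [hfun] at hfprod
  have hvfin : Real.exp S = (b : ℝ) ^ (z * b / ((b : ℝ) - 1)) *
      ∏' l : ℕ, Real.Gamma (1 + z / (b:ℝ) ^ (l + 1)) ^ b / Real.Gamma (1 + z / (b:ℝ) ^ l) := by
    rw [hSfinal, Real.exp_add, hGprod.tprod_eq]
    congr 1
    rw [Real.rpow_def_of_pos hb0, mul_comm]
  rw [← hvfin]
  exact hfprod
end

section
/- Let b ≥ 2 be an integer and let z be a complex number with |z| < 1 and z ≠ 0. Then ∑_{n=1}^{∞} s_b(n)·z^n = (1/(1−z)) · ∑_{l=0}^{∞} (∑_{k=1}^{b−1} k·z^{k·b^l}) / (∑_{k=0}^{b−1} z^{k·b^l}); equivalently, the right-hand side equals (1/(1−z)) · ∑_{l=0}^{∞} (z^{b^l} − b·z^{b^{l+1}} + (b−1)·z^{(b+1)·b^l}) / ((1−z^{b^l})(1−z^{b^{l+1}})). In particular for b = 2: ∑_{n=1}^{∞} s_2(n)·z^n = (1/(1−z)) · ∑_{l=0}^{∞} z^{2^l}/(1 + z^{2^l}). -/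
open Finset Filter

lemma digitSum_rec (b : ℕ) (hb : 2 ≤ b) (n : ℕ) :
    digitSum b n = n % b + digitSum b (n / b) := by
  rcases Nat.eq_zero_or_pos n with h | h
  · simp [h, digitSum]
  · rw [digitSum, Nat.digits_def' (by omega : 1 < b) h]; simp [digitSum, add_comm]

lemma digitSum_le (b : ℕ) (hb : 2 ≤ b) : ∀ n, digitSum b n ≤ n := by
  intro n; induction n using Nat.strong_induction_on with
  | _ n ih =>
    rcases Nat.eq_zero_or_pos n with h | h
    · simp [h, digitSum]
    · rw [digitSum_rec b hb]
      have h1 := ih (n / b) (Nat.div_lt_self h (by omega))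
      have h3 : n / b ≤ b * (n / b) := Nat.le_mul_of_pos_left _ (by omega)
      have h2 : n % b + b * (n / b) = n := Nat.mod_add_div n b
      omega

noncomputable def F (b : ℕ) (z : ℂ) : ℂ := ∑' n : ℕ, (digitSum b n : ℂ) * z ^ n

lemma summable_nat_mul (z : ℂ) (hz : ‖z‖ < 1) : Summable (fun n : ℕ => (n:ℝ) * ‖z‖ ^ n) := by
  simpa using summable_pow_mul_geometric_of_norm_lt_one (R := ℝ) 1 (r := ‖z‖) (by simpa using hz)

lemma summable_aux_s12 (b : ℕ) (hb : 2 ≤ b) (z : ℂ) (hz : ‖z‖ < 1) (g : ℕ → ℕ)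
    (hg : ∀ n, g n ≤ n) : Summable (fun n : ℕ => (g n : ℂ) * z ^ n) := by
  apply Summable.of_norm_bounded (summable_nat_mul z hz)
  intro n
  rw [norm_mul, norm_pow]
  have : ‖((g n):ℂ)‖ ≤ (n:ℝ) := by
    simpa using (by exact_mod_cast hg n : ((g n):ℝ) ≤ n)
  gcongr

lemma summable_F (b : ℕ) (hb : 2 ≤ b) (z : ℂ) (hz : ‖z‖ < 1) :
    Summable (fun n : ℕ => (digitSum b n : ℂ) * z ^ n) :=
  summable_aux_s12 b hb z hz _ (digitSum_le b hb)

lemma summable_mod (b : ℕ) (hb : 2 ≤ b) (z : ℂ) (hz : ‖z‖ < 1) :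
    Summable (fun n : ℕ => ((n % b : ℕ) : ℂ) * z ^ n) :=
  summable_aux_s12 b hb z hz _ (fun n => (Nat.mod_le n b))

lemma summable_div (b : ℕ) (hb : 2 ≤ b) (z : ℂ) (hz : ‖z‖ < 1) :
    Summable (fun n : ℕ => (digitSum b (n / b) : ℂ) * z ^ n) :=
  summable_aux_s12 b hb z hz _ (fun n => le_trans (digitSum_le b hb _) (Nat.div_le_self n b))

-- reindexing lemma: for f : ℕ → ℂ summable,  ∑' n, f n = ∑' m, ∑ j in range b, f (m*b+j)
lemma tsum_divmod (b : ℕ) (hb : 2 ≤ b) (f : ℕ → ℂ) (hf : Summable f) :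
    ∑' n : ℕ, f n = ∑' m : ℕ, ∑ j ∈ Finset.range b, f (m * b + j) := by
  haveI : NeZero b := ⟨by omega⟩
  rw [← (Nat.divModEquiv b).symm.tsum_eq f]
  have hs : Summable (fun p : ℕ × Fin b => f ((Nat.divModEquiv b).symm p)) :=
    (Nat.divModEquiv b).symm.summable_iff.mpr hf
  rw [Summable.tsum_prod' hs (fun _ => Summable.of_finite)]
  congr 1
  ext m
  rw [tsum_fintype]
  rw [← Fin.sum_univ_eq_sum_range (fun j => f (m * b + j)) b]
  simp [Nat.divModEquiv]

lemma norm_pow_lt_one (z : ℂ) (hz : ‖z‖ < 1) (m : ℕ) (hm : m ≠ 0) : ‖z ^ m‖ < 1 := by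
  rw [norm_pow]
  exact pow_lt_one₀ (norm_nonneg z) hz hm

lemma tsum_mod_eq (b : ℕ) (hb : 2 ≤ b) (z : ℂ) (hz : ‖z‖ < 1) :
    ∑' n : ℕ, ((n % b : ℕ) : ℂ) * z ^ n
      = (∑ k ∈ Finset.range b, (k:ℂ) * z ^ k) * (1 - z ^ b)⁻¹ := by
  rw [tsum_divmod b hb _ (summable_mod b hb z hz)]
  have h1 : ∀ m : ℕ, ∑ j ∈ Finset.range b, (((m * b + j) % b : ℕ) : ℂ) * z ^ (m * b + j)
      = (∑ k ∈ Finset.range b, (k:ℂ) * z ^ k) * (z ^ b) ^ m := by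
    intro m
    rw [Finset.sum_mul]
    refine Finset.sum_congr rfl fun j hj => ?_
    have : (m * b + j) % b = j := by
      rw [mul_comm, Nat.mul_add_mod, Nat.mod_eq_of_lt (Finset.mem_range.mp hj)]
    rw [this, pow_add, pow_mul]
    ring
  simp_rw [h1]
  rw [tsum_mul_left, tsum_geometric_of_norm_lt_one (norm_pow_lt_one z hz b (by omega))]

lemma tsum_div_eq (b : ℕ) (hb : 2 ≤ b) (z : ℂ) (hz : ‖z‖ < 1) :
    ∑' n : ℕ, ((digitSum b (n / b) : ℕ) : ℂ) * z ^ n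
      = (∑ k ∈ Finset.range b, z ^ k) * F b (z ^ b) := by
  rw [tsum_divmod b hb _ (summable_div b hb z hz)]
  have h1 : ∀ m : ℕ, ∑ j ∈ Finset.range b, ((digitSum b ((m * b + j) / b) : ℕ) : ℂ) * z ^ (m * b + j)
      = (∑ k ∈ Finset.range b, z ^ k) * ((digitSum b m : ℂ) * (z ^ b) ^ m) := by
    intro m
    rw [Finset.sum_mul]
    refine Finset.sum_congr rfl fun j hj => ?_
    have : (m * b + j) / b = m := by
      rw [mul_comm, Nat.mul_add_div (by omega), Nat.div_eq_of_lt (Finset.mem_range.mp hj)]; ring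
    rw [this, pow_add, pow_mul]
    ring
  simp_rw [h1]
  rw [tsum_mul_left]
  rfl

lemma funEq (b : ℕ) (hb : 2 ≤ b) (z : ℂ) (hz : ‖z‖ < 1) :
    F b z = (∑ k ∈ Finset.range b, (k:ℂ) * z ^ k) * (1 - z ^ b)⁻¹
      + (∑ k ∈ Finset.range b, z ^ k) * F b (z ^ b) := by
  have h : F b z = ∑' n : ℕ, (((n % b : ℕ) : ℂ) * z ^ n + ((digitSum b (n / b) : ℕ) : ℂ) * z ^ n) := by
    refine tsum_congr fun n => ?_
    rw [digitSum_rec b hb n]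
    push_cast
    ring
  rw [h, Summable.tsum_add (summable_mod b hb z hz) (summable_div b hb z hz),
    tsum_mod_eq b hb z hz, tsum_div_eq b hb z hz]

lemma one_sub_pow_ne (z : ℂ) (hz : ‖z‖ < 1) (m : ℕ) (hm : m ≠ 0) : 1 - z ^ m ≠ 0 := by
  have h1 : ‖z ^ m‖ < 1 := norm_pow_lt_one z hz m hm
  intro h
  have : z ^ m = 1 := by linear_combination -h
  rw [this] at h1
  norm_num at h1

lemma geom_ne (b : ℕ) (hb : 2 ≤ b) (z : ℂ) (hz : ‖z‖ < 1) :
    (∑ k ∈ Finset.range b, z ^ k) ≠ 0 := by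
  have hg : (1 - z) * ∑ k ∈ Finset.range b, z ^ k = 1 - z ^ b := by
    have := geom_sum_mul z b
    linear_combination -this
  intro h
  rw [h, mul_zero] at hg
  exact one_sub_pow_ne z hz b (by omega) hg.symm

lemma stepMul (b : ℕ) (hb : 2 ≤ b) (z : ℂ) (hz : ‖z‖ < 1) :
    F b z * (1 - z)
      = (∑ k ∈ Finset.range b, (k:ℂ) * z ^ k) / (∑ k ∈ Finset.range b, z ^ k)
        + F b (z ^ b) * (1 - z ^ b) := by
  have hg : (1 - z) * ∑ k ∈ Finset.range b, z ^ k = 1 - z ^ b := by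
    have := geom_sum_mul z b
    linear_combination -this
  have h1 : (1 - z) ≠ 0 := by
    have := one_sub_pow_ne z hz 1 one_ne_zero
    simpa using this
  have h2 := one_sub_pow_ne z hz b (by omega)
  have h3 := geom_ne b hb z hz
  have hAG : (∑ k ∈ Finset.range b, (k:ℂ) * z ^ k) / (∑ k ∈ Finset.range b, z ^ k)
      = (∑ k ∈ Finset.range b, (k:ℂ) * z ^ k) * (1 - z) * (1 - z ^ b)⁻¹ := by
    rw [div_eq_iff h3]
    field_simp
    linear_combination (-(∑ k ∈ Finset.range b, (k:ℂ) * z ^ k)) * hg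
  rw [funEq b hb z hz, hAG]
  have h4 : (∑ k ∈ Finset.range b, z ^ k) * F b (z ^ b) * (1 - z)
      = F b (z ^ b) * (1 - z ^ b) := by linear_combination F b (z ^ b) * hg
  linear_combination h4

noncomputable def Q (b : ℕ) (z : ℂ) (l : ℕ) : ℂ :=
  (∑ k ∈ Finset.Icc 1 (b - 1), (k : ℂ) * z ^ (k * b ^ l)) /
    (∑ k ∈ Finset.range b, z ^ (k * b ^ l))

lemma Q_eq (b : ℕ) (hb : 2 ≤ b) (z : ℂ) (l : ℕ) :
    Q b z l = (∑ k ∈ Finset.range b, (k:ℂ) * (z ^ (b ^ l)) ^ k)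
      / (∑ k ∈ Finset.range b, (z ^ (b ^ l)) ^ k) := by
  unfold Q
  have hexp : ∀ k : ℕ, z ^ (k * b ^ l) = (z ^ (b ^ l)) ^ k := by
    intro k; rw [← pow_mul, mul_comm]
  have hsub : Finset.Icc 1 (b - 1) ⊆ Finset.range b := by
    intro x hx
    have := Finset.mem_Icc.mp hx
    exact Finset.mem_range.mpr (by omega)
  have hzero : ∀ x ∈ Finset.range b, x ∉ Finset.Icc 1 (b - 1) →
      (x:ℂ) * (z ^ (b ^ l)) ^ x = 0 := by
    intro x hx hx'
    have h1 := Finset.mem_range.mp hx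
    have hx0 : x = 0 := by
      by_contra h
      exact hx' (Finset.mem_Icc.mpr ⟨by omega, by omega⟩)
    simp [hx0]
  congr 1
  · calc ∑ k ∈ Finset.Icc 1 (b - 1), (k:ℂ) * z ^ (k * b ^ l)
        = ∑ k ∈ Finset.Icc 1 (b - 1), (k:ℂ) * (z ^ (b ^ l)) ^ k :=
          Finset.sum_congr rfl fun k _ => by rw [hexp]
      _ = ∑ k ∈ Finset.range b, (k:ℂ) * (z ^ (b ^ l)) ^ k :=
          Finset.sum_subset hsub hzero
  · exact Finset.sum_congr rfl fun k _ => by rw [hexp]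

lemma tel (b : ℕ) (hb : 2 ≤ b) (z : ℂ) (hz : ‖z‖ < 1) (L : ℕ) :
    F b z * (1 - z) = (∑ l ∈ Finset.range L, Q b z l)
      + F b (z ^ (b ^ L)) * (1 - z ^ (b ^ L)) := by
  induction L with
  | zero => simp
  | succ L ih =>
    rw [ih, Finset.sum_range_succ]
    have hw : ‖z ^ (b ^ L)‖ < 1 :=
      norm_pow_lt_one z hz _ (by positivity)
    have := stepMul b hb (z ^ (b ^ L)) hw
    rw [Q_eq b hb z L]
    rw [this]
    have hpow : (z ^ (b ^ L)) ^ b = z ^ (b ^ (L + 1)) := by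
      rw [← pow_mul, ← pow_succ]
    rw [hpow]
    ring

lemma summable_shift (r : ℝ) (h0 : 0 < r) (hr : r < 1) :
    Summable (fun n : ℕ => (n:ℝ) * r ^ (n - 1)) := by
  have hs : Summable (fun n : ℕ => r⁻¹ * ((n:ℝ) * r ^ n)) :=
    (summable_pow_mul_geometric_of_norm_lt_one (R := ℝ) 1 (r := r)
      (by rwa [Real.norm_eq_abs, abs_of_pos h0])).mul_left r⁻¹ |>.congr (by
        intro n; rw [pow_one])
  apply Summable.of_norm_bounded hs
  intro n
  rcases Nat.eq_zero_or_pos n with h | h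
  · simp [h]
  · rw [Real.norm_eq_abs, abs_of_nonneg (by positivity)]
    apply le_of_eq
    have hpow : r ^ n = r * r ^ (n - 1) := by
      rw [← pow_succ']
      congr 1
      omega
    rw [hpow]
    field_simp

lemma F_bound (b : ℕ) (hb : 2 ≤ b) (r : ℝ) (h0 : 0 < r) (hr : r < 1)
    (w : ℂ) (hw : ‖w‖ ≤ r) :
    ‖F b w‖ ≤ ‖w‖ * ∑' n : ℕ, (n:ℝ) * r ^ (n - 1) := by
  have hwlt : ‖w‖ < 1 := lt_of_le_of_lt hw hr
  apply tsum_of_norm_bounded (((summable_shift r h0 hr).hasSum).mul_left ‖w‖)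
  intro n
  rw [norm_mul, norm_pow]
  have h1 : ‖(digitSum b n : ℂ)‖ ≤ (n:ℝ) := by
    simpa using (by exact_mod_cast digitSum_le b hb n : ((digitSum b n : ℕ):ℝ) ≤ n)
  rcases Nat.eq_zero_or_pos n with h | h
  · simp [h, digitSum]
  · calc ‖(digitSum b n : ℂ)‖ * ‖w‖ ^ n ≤ (n:ℝ) * ‖w‖ ^ n := by
          gcongr
      _ = ‖w‖ * ((n:ℝ) * ‖w‖ ^ (n-1)) := by
          have hn : ‖w‖ ^ n = ‖w‖ * ‖w‖ ^ (n-1) := by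
            rw [← pow_succ']
            congr 1
            omega
          rw [hn]; ring
      _ ≤ ‖w‖ * ((n:ℝ) * r ^ (n-1)) := by
          gcongr

lemma tail_tendsto (b : ℕ) (hb : 2 ≤ b) (z : ℂ) (hz : ‖z‖ < 1) (hz0 : z ≠ 0) :
    Filter.Tendsto (fun L => F b (z ^ (b ^ L)) * (1 - z ^ (b ^ L)))
      Filter.atTop (nhds 0) := by
  set r := ‖z‖ with hr
  have h0 : 0 < r := norm_pos_iff.mpr hz0
  set C := ∑' n : ℕ, (n:ℝ) * r ^ (n - 1) with hC
  have hCnn : 0 ≤ C := tsum_nonneg (fun n => by positivity)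
  apply squeeze_zero_norm (a := fun L => (2 * C) * r ^ L)
  · intro L
    have hwle : ‖z ^ (b ^ L)‖ ≤ r := by
      rw [norm_pow]
      calc r ^ (b ^ L) ≤ r ^ 1 := pow_le_pow_of_le_one h0.le hz.le (Nat.one_le_pow _ _ (by omega))
        _ = r := pow_one r
    have h1 : ‖F b (z ^ (b ^ L))‖ ≤ ‖z ^ (b ^ L)‖ * C := F_bound b hb r h0 hz _ hwle
    have h2 : ‖(1 : ℂ) - z ^ (b ^ L)‖ ≤ 2 := by
      calc ‖(1:ℂ) - z ^ (b ^ L)‖ ≤ ‖(1:ℂ)‖ + ‖z ^ (b ^ L)‖ := norm_sub_le _ _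
        _ ≤ 1 + 1 := by
            simp only [norm_one]
            gcongr
            exact le_trans hwle hz.le
        _ = 2 := by norm_num
    have h3 : ‖z ^ (b ^ L)‖ ≤ r ^ L := by
      rw [norm_pow]
      exact pow_le_pow_of_le_one h0.le hz.le (Nat.lt_pow_self (n := L) (by omega)).le
    calc ‖F b (z ^ (b ^ L)) * (1 - z ^ (b ^ L))‖
        = ‖F b (z ^ (b ^ L))‖ * ‖(1:ℂ) - z ^ (b ^ L)‖ := norm_mul _ _
      _ ≤ (‖z ^ (b ^ L)‖ * C) * 2 := by
          apply mul_le_mul h1 h2 (norm_nonneg _)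
          positivity
      _ ≤ (r ^ L * C) * 2 := by gcongr
      _ = (2 * C) * r ^ L := by ring
  · rw [show (0:ℝ) = (2*C)*0 by ring]
    exact (tendsto_pow_atTop_nhds_zero_of_lt_one h0.le hz).const_mul _

lemma summable_Q (b : ℕ) (hb : 2 ≤ b) (z : ℂ) (hz : ‖z‖ < 1) (hz0 : z ≠ 0) :
    Summable (Q b z) := by
  set r := ‖z‖ with hrdef
  have h0 : 0 < r := norm_pos_iff.mpr hz0
  have h1 : 1 - r > 0 := by linarith
  apply Summable.of_norm_bounded (g := fun l => ((2 * (b:ℝ)^2 / (1 - r)) * r ^ l))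
    (((summable_geometric_of_lt_one h0.le hz)).mul_left _)
  intro l
  rw [Q_eq b hb z l]
  set w := z ^ (b ^ l) with hwdef
  have hwle : ‖w‖ ≤ r := by
    rw [hwdef, norm_pow]
    calc r ^ (b ^ l) ≤ r ^ 1 := pow_le_pow_of_le_one h0.le hz.le (Nat.one_le_pow _ _ (by omega))
      _ = r := pow_one r
  have hwlt : ‖w‖ < 1 := lt_of_le_of_lt hwle hz
  have hwl : ‖w‖ ≤ r ^ l := by
    rw [hwdef, norm_pow]
    exact pow_le_pow_of_le_one h0.le hz.le (Nat.lt_pow_self (n := l) (by omega)).le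
  -- numerator bound
  have hA : ‖∑ k ∈ Finset.range b, (k:ℂ) * w ^ k‖ ≤ (b:ℝ)^2 * ‖w‖ := by
    calc ‖∑ k ∈ Finset.range b, (k:ℂ) * w ^ k‖
        ≤ ∑ k ∈ Finset.range b, ‖(k:ℂ) * w ^ k‖ := norm_sum_le _ _
      _ ≤ ∑ _k ∈ Finset.range b, (b:ℝ) * ‖w‖ := by
          apply Finset.sum_le_sum
          intro k hk
          rw [norm_mul, norm_pow]
          rcases Nat.eq_zero_or_pos k with h | h
          · simp [h]
            positivity
          · have hk1 : ‖(k:ℂ)‖ ≤ (b:ℝ) := by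
              simp only [Complex.norm_natCast]
              exact_mod_cast (Finset.mem_range.mp hk).le
            have hk2 : ‖w‖ ^ k ≤ ‖w‖ := pow_le_of_le_one (norm_nonneg w) hwlt.le (by omega)
            exact mul_le_mul hk1 hk2 (by positivity) (by positivity)
      _ = (b:ℝ)^2 * ‖w‖ := by
          rw [Finset.sum_const, Finset.card_range, nsmul_eq_mul]
          ring
  -- denominator bound
  have hg : (1 - w) * ∑ k ∈ Finset.range b, w ^ k = 1 - w ^ b := by
    have := geom_sum_mul w b
    linear_combination -this
  have hG : (1 - r) / 2 ≤ ‖∑ k ∈ Finset.range b, w ^ k‖ := by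
    have hnum : 1 - r ≤ ‖1 - w ^ b‖ := by
      have : ‖w ^ b‖ ≤ r := by
        rw [norm_pow]
        calc ‖w‖ ^ b ≤ ‖w‖ ^ 1 := pow_le_pow_of_le_one (norm_nonneg w) hwlt.le (by omega)
          _ = ‖w‖ := pow_one _
          _ ≤ r := hwle
      calc 1 - r ≤ 1 - ‖w ^ b‖ := by linarith
        _ ≤ ‖(1:ℂ)‖ - ‖w ^ b‖ := by simp
        _ ≤ ‖1 - w ^ b‖ := norm_sub_norm_le _ _
    have hden : ‖1 - w‖ ≤ 2 := by
      calc ‖(1:ℂ) - w‖ ≤ ‖(1:ℂ)‖ + ‖w‖ := norm_sub_le _ _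
        _ ≤ 1 + 1 := by simp only [norm_one]; gcongr
        _ = 2 := by norm_num
    have := hg
    have heq : ‖1 - w‖ * ‖∑ k ∈ Finset.range b, w ^ k‖ = ‖1 - w ^ b‖ := by
      rw [← norm_mul, hg]
    nlinarith [norm_nonneg (∑ k ∈ Finset.range b, w ^ k), norm_nonneg (1 - w)]
  have hGpos : 0 < ‖∑ k ∈ Finset.range b, w ^ k‖ := lt_of_lt_of_le (by linarith) hG
  rw [norm_div]
  rw [div_le_iff₀ hGpos]
  calc ‖∑ k ∈ Finset.range b, (k:ℂ) * w ^ k‖ ≤ (b:ℝ)^2 * ‖w‖ := hA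
    _ ≤ (b:ℝ)^2 * r ^ l := by gcongr
    _ = ((2 * (b:ℝ)^2 / (1 - r)) * r ^ l) * ((1 - r)/2) := by
        field_simp
    _ ≤ ((2 * (b:ℝ)^2 / (1 - r)) * r ^ l) * ‖∑ k ∈ Finset.range b, w ^ k‖ := by
        gcongr

lemma tsum_Q_eq (b : ℕ) (hb : 2 ≤ b) (z : ℂ) (hz : ‖z‖ < 1) (hz0 : z ≠ 0) :
    ∑' l : ℕ, Q b z l = F b z * (1 - z) := by
  have hQ := summable_Q b hb z hz hz0
  have h1 : Filter.Tendsto (fun L => ∑ l ∈ Finset.range L, Q b z l)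
      Filter.atTop (nhds (F b z * (1 - z))) := by
    have h2 := tail_tendsto b hb z hz hz0
    have h3 : Filter.Tendsto
        (fun L => F b z * (1 - z) - F b (z ^ (b ^ L)) * (1 - z ^ (b ^ L)))
        Filter.atTop (nhds (F b z * (1 - z) - 0)) := tendsto_const_nhds.sub h2
    rw [sub_zero] at h3
    refine h3.congr fun L => ?_
    rw [tel b hb z hz L]
    ring
  exact tendsto_nhds_unique hQ.hasSum.tendsto_sum_nat h1

lemma part1 (b : ℕ) (hb : 2 ≤ b) (z : ℂ) (hz : ‖z‖ < 1) (hz0 : z ≠ 0) :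
    ∑' n : ℕ, (digitSum b (n + 1) : ℂ) * z ^ (n + 1)
      = (1 / (1 - z)) * ∑' l : ℕ, Q b z l := by
  have hF := summable_F b hb z hz
  have h1 : F b z = (digitSum b 0 : ℂ) * z ^ 0
      + ∑' n : ℕ, (digitSum b (n + 1) : ℂ) * z ^ (n + 1) := hF.tsum_eq_zero_add
  have h2 : ∑' n : ℕ, (digitSum b (n + 1) : ℂ) * z ^ (n + 1) = F b z := by
    rw [h1]
    simp [digitSum]
  rw [h2, tsum_Q_eq b hb z hz hz0]
  have h3 : (1 : ℂ) - z ≠ 0 := by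
    have := one_sub_pow_ne z hz 1 one_ne_zero
    simpa using this
  field_simp

lemma sum_k_pow (n : ℕ) (w : ℂ) :
    (∑ k ∈ Finset.range n, (k:ℂ) * w ^ k) * (1 - w)^2
      = w - (n:ℂ) * w ^ n + ((n:ℂ) - 1) * w ^ (n+1) := by
  induction n with
  | zero => simp
  | succ n ih =>
    rw [Finset.sum_range_succ, add_mul, ih]
    push_cast
    ring

lemma Qalt (b : ℕ) (hb : 2 ≤ b) (z : ℂ) (hz : ‖z‖ < 1) (l : ℕ) :
    Q b z l = (z ^ (b ^ l) - (b : ℂ) * z ^ (b ^ (l + 1)) + ((b : ℂ) - 1) * z ^ ((b + 1) * b ^ l)) /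
      ((1 - z ^ (b ^ l)) * (1 - z ^ (b ^ (l + 1)))) := by
  rw [Q_eq b hb z l]
  have e1 : z ^ (b ^ (l+1)) = (z ^ (b ^ l)) ^ b := by rw [← pow_mul, ← pow_succ]
  have e2 : z ^ ((b+1) * b ^ l) = (z ^ (b ^ l)) ^ (b+1) := by rw [← pow_mul, mul_comm]
  rw [e1, e2]
  set w := z ^ (b ^ l) with hwdef
  have hw : ‖w‖ < 1 := norm_pow_lt_one z hz _ (by positivity)
  have hg : (1 - w) * ∑ k ∈ Finset.range b, w ^ k = 1 - w ^ b := by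
    have := geom_sum_mul w b
    linear_combination -this
  have hA := sum_k_pow b w
  have h1 : (1:ℂ) - w ≠ 0 := by
    have := one_sub_pow_ne w hw 1 one_ne_zero
    simpa using this
  have h2 : (1:ℂ) - w ^ b ≠ 0 := one_sub_pow_ne w hw b (by omega)
  have h3 := geom_ne b hb w hw
  rw [div_eq_div_iff h3 (mul_ne_zero h1 h2)]
  linear_combination (∑ k ∈ Finset.range b, w ^ k) * hA
    - (∑ k ∈ Finset.range b, (k:ℂ) * w ^ k) * (1 - w) * hg

lemma part3 (z : ℂ) (hz : ‖z‖ < 1) (hz0 : z ≠ 0) :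
    ∑' n : ℕ, (digitSum 2 (n + 1) : ℂ) * z ^ (n + 1)
      = (1 / (1 - z)) * ∑' l : ℕ, z ^ (2 ^ l) / (1 + z ^ (2 ^ l)) := by
  rw [part1 2 le_rfl z hz hz0]
  congr 1
  refine tsum_congr fun l => ?_
  unfold Q
  norm_num [Finset.sum_range_succ]

theorem stmt12 (b : ℕ) (hb : 2 ≤ b) (z : ℂ) (hz : ‖z‖ < 1) (hz0 : z ≠ 0) :
    (∑' n : ℕ, (digitSum b (n + 1) : ℂ) * z ^ (n + 1) =
      (1 / (1 - z)) * ∑' l : ℕ,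
        (∑ k ∈ Finset.Icc 1 (b - 1), (k : ℂ) * z ^ (k * b ^ l)) /
          (∑ k ∈ Finset.range b, z ^ (k * b ^ l))) ∧
    ((1 / (1 - z)) * ∑' l : ℕ,
        (∑ k ∈ Finset.Icc 1 (b - 1), (k : ℂ) * z ^ (k * b ^ l)) /
          (∑ k ∈ Finset.range b, z ^ (k * b ^ l)) =
      (1 / (1 - z)) * ∑' l : ℕ,
        (z ^ (b ^ l) - (b : ℂ) * z ^ (b ^ (l + 1)) + ((b : ℂ) - 1) * z ^ ((b + 1) * b ^ l)) /
          ((1 - z ^ (b ^ l)) * (1 - z ^ (b ^ (l + 1))))) ∧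
    (∑' n : ℕ, (digitSum 2 (n + 1) : ℂ) * z ^ (n + 1) =
      (1 / (1 - z)) * ∑' l : ℕ, z ^ (2 ^ l) / (1 + z ^ (2 ^ l))) := by
  have hz' : ‖z‖ < 1 := hz
  refine ⟨part1 b hb z hz' hz0, ?_, part3 z hz' hz0⟩
  congr 1
  exact tsum_congr fun l => Qalt b hb z hz' l
end

section
/- Let b ≥ 2 and p ≥ 1 be integers and let z be a complex number with |z| < 1. Then ∑_{n=1}^{b^p−1} s_b(n)·z^n = ((1 − z^{b^p})/(1−z)) · ∑_{l=0}^{p−1} (z^{b^l} − b·z^{b^{l+1}} + (b−1)·z^{(b+1)·b^l}) / ((1−z^{b^l})(1−z^{b^{l+1}})). In particular for b = 2: ∑_{n=1}^{2^p−1} s_2(n)·z^n = ((1 − z^{2^p})/(1−z)) · ∑_{l=0}^{p−1} z^{2^l}/(1 + z^{2^l}). -/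
lemma digitSum_of_lt {b a : ℕ} (hb : 2 ≤ b) (ha : a < b) : digitSum b a = a := by
  rcases Nat.eq_zero_or_pos a with rfl | h
  · simp [digitSum]
  · rw [digitSum, Nat.digits_def' (by omega : 1 < b) h,
      Nat.div_eq_of_lt ha, Nat.mod_eq_of_lt ha]
    simp

lemma digitSum_split {b p m : ℕ} (hb : 2 ≤ b) (hm : m < b ^ p) (a : ℕ) :
    digitSum b (m + b ^ p * a) = digitSum b m + digitSum b a := by
  rcases Nat.eq_zero_or_pos a with rfl | ha
  · simp [digitSum]
  rcases Nat.eq_zero_or_pos m with rfl | hm0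
  · simp only [Nat.zero_add, digitSum]
    rw [Nat.digits_base_pow_mul (by omega) ha]
    simp
  · have hlen : (Nat.digits b m).length ≤ p := by
      rw [Nat.digits_len b m (by omega) (by omega)]
      have := (Nat.log_lt_iff_lt_pow (by omega : 1 < b) (by omega : m ≠ 0)).mpr hm
      omega
    have key := Nat.digits_append_zeroes_append_digits (b := b)
      (k := p - (Nat.digits b m).length) (m := a) (n := m) (by omega) ha
    rw [show (Nat.digits b m).length + (p - (Nat.digits b m).length) = p by omega] at key
    rw [digitSum, ← key]
    simp [digitSum]

lemma sum_split {N b : ℕ} (hN : 0 < N) (g : ℕ → ℂ) :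
    ∑ n ∈ Finset.range (N * b), g n =
      ∑ a ∈ Finset.range b, ∑ m ∈ Finset.range N, g (m + N * a) := by
  rw [← Finset.sum_product']
  apply Finset.sum_nbij' (i := fun n => (n / N, n % N)) (j := fun x => x.2 + N * x.1)
  · intro n hn
    simp only [Finset.mem_range] at hn
    simp only [Finset.mem_product, Finset.mem_range]
    exact ⟨Nat.div_lt_of_lt_mul (by omega), Nat.mod_lt _ hN⟩
  · intro x hx
    simp only [Finset.mem_product, Finset.mem_range] at hx
    simp only [Finset.mem_range]
    calc x.2 + N * x.1 < N * (x.1 + 1) := by nlinarith [hx.2]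
    _ ≤ N * b := Nat.mul_le_mul_left _ hx.1
  · intro n _; exact Nat.mod_add_div n N
  · intro x hx
    simp only [Finset.mem_product, Finset.mem_range] at hx
    have h1 : (x.2 + N * x.1) / N = x.1 := by
      rw [Nat.add_mul_div_left _ _ hN, Nat.div_eq_of_lt hx.2, Nat.zero_add]
    have h2 : (x.2 + N * x.1) % N = x.2 := by
      rw [Nat.add_mul_mod_self_left, Nat.mod_eq_of_lt hx.2]
    simp [h1, h2]
  · intro n _
    have := Nat.mod_add_div n N
    simp only []
    rw [this]

lemma aux_geom (w : ℂ) (n : ℕ) :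
    (∑ a ∈ Finset.range n, (a : ℂ) * w ^ a) * (1 - w) ^ 2 =
      w - n * w ^ n + ((n : ℂ) - 1) * w ^ (n + 1) := by
  induction n with
  | zero => simp
  | succ n ih =>
    rw [Finset.sum_range_succ, add_mul, ih]
    push_cast
    ring

lemma pow_ne_one_of_abs_lt {z : ℂ} (hz : ‖z‖ < 1) {k : ℕ} (hk : 1 ≤ k) :
    z ^ k ≠ 1 := by
  intro h
  have : ‖z ^ k‖ < 1 := by
    rw [norm_pow]
    exact pow_lt_one₀ (norm_nonneg z) hz (by omega)
  rw [h] at this; simp at this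

lemma main_identity (b : ℕ) (hb : 2 ≤ b) (z : ℂ) (hz : ‖z‖ < 1) (p : ℕ) :
    ∑ n ∈ Finset.range (b ^ p), (digitSum b n : ℂ) * z ^ n =
      ((1 - z ^ b ^ p) / (1 - z)) * ∑ l ∈ Finset.range p,
        (z ^ b ^ l - (b : ℂ) * z ^ b ^ (l + 1) + ((b : ℂ) - 1) * z ^ ((b + 1) * b ^ l)) /
          ((1 - z ^ b ^ l) * (1 - z ^ b ^ (l + 1))) := by
  have h1 : (1 : ℂ) - z ≠ 0 := by
    have := pow_ne_one_of_abs_lt hz (k := 1) le_rfl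
    simpa [sub_ne_zero] using this.symm
  induction p with
  | zero => simp [digitSum]
  | succ p ih =>
    set w : ℂ := z ^ b ^ p with hw_def
    have hbp : 1 ≤ b ^ p := Nat.one_le_pow _ _ (by omega)
    have hw : (1 : ℂ) - w ≠ 0 := sub_ne_zero.mpr (pow_ne_one_of_abs_lt hz hbp).symm
    have hwb_pow : z ^ b ^ (p + 1) = w ^ b := by
      rw [hw_def, ← pow_mul, ← pow_succ]
    have hwb1_pow : z ^ ((b + 1) * b ^ p) = w ^ (b + 1) := by
      rw [hw_def, ← pow_mul, mul_comm]
    have hwb : (1 : ℂ) - w ^ b ≠ 0 := by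
      rw [← hwb_pow]
      exact sub_ne_zero.mpr (pow_ne_one_of_abs_lt hz (Nat.one_le_pow _ _ (by omega))).symm
    -- combinatorial split
    have split : ∑ n ∈ Finset.range (b ^ (p + 1)), (digitSum b n : ℂ) * z ^ n =
        ∑ a ∈ Finset.range b, ∑ m ∈ Finset.range (b ^ p),
          ((digitSum b m : ℂ) + (a : ℂ)) * (z ^ m * w ^ a) := by
      rw [pow_succ, sum_split (by omega) (fun n => (digitSum b n : ℂ) * z ^ n)]
      apply Finset.sum_congr rfl
      intro a ha
      apply Finset.sum_congr rfl
      intro m hm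
      simp only [Finset.mem_range] at ha hm
      rw [digitSum_split hb hm a, digitSum_of_lt hb ha, pow_add, pow_mul]
      push_cast
      ring
    set S : ℂ := ∑ m ∈ Finset.range (b ^ p), (digitSum b m : ℂ) * z ^ m with hS_def
    set T : ℂ := ∑ l ∈ Finset.range p,
        (z ^ b ^ l - (b : ℂ) * z ^ b ^ (l + 1) + ((b : ℂ) - 1) * z ^ ((b + 1) * b ^ l)) /
          ((1 - z ^ b ^ l) * (1 - z ^ b ^ (l + 1))) with hT_def
    have expand : ∑ a ∈ Finset.range b, ∑ m ∈ Finset.range (b ^ p),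
        ((digitSum b m : ℂ) + (a : ℂ)) * (z ^ m * w ^ a) =
        (∑ a ∈ Finset.range b, w ^ a) * S +
          (∑ a ∈ Finset.range b, (a : ℂ) * w ^ a) * (∑ m ∈ Finset.range (b ^ p), z ^ m) := by
      rw [Finset.sum_mul, Finset.sum_mul, ← Finset.sum_add_distrib]
      apply Finset.sum_congr rfl
      intro a _
      rw [hS_def, Finset.mul_sum, Finset.mul_sum, ← Finset.sum_add_distrib]
      apply Finset.sum_congr rfl
      intro m _
      ring
    have hG : (∑ a ∈ Finset.range b, w ^ a) = (1 - w ^ b) / (1 - w) := by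
      rw [eq_div_iff hw]
      have := geom_sum_mul w b
      linear_combination -this
    have hA : (∑ a ∈ Finset.range b, (a : ℂ) * w ^ a) =
        (w - (b : ℂ) * w ^ b + ((b : ℂ) - 1) * w ^ (b + 1)) / (1 - w) ^ 2 := by
      rw [eq_div_iff (pow_ne_zero 2 hw)]
      exact aux_geom w b
    have hQ : (∑ m ∈ Finset.range (b ^ p), z ^ m) = (1 - w) / (1 - z) := by
      rw [eq_div_iff h1, hw_def]
      have := geom_sum_mul z (b ^ p)
      linear_combination -this
    rw [split, expand, hG, hA, hQ, ih, Finset.sum_range_succ, ← hT_def,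
      hwb_pow, hwb1_pow, ← hw_def]
    field_simp

theorem stmt13 (b p : ℕ) (hb : 2 ≤ b) (hp : 1 ≤ p) (z : ℂ) (hz : ‖z‖ < 1) :
    (∑ n ∈ Finset.Icc 1 (b ^ p - 1), (digitSum b n : ℂ) * z ^ n =
      ((1 - z ^ (b ^ p)) / (1 - z)) * ∑ l ∈ Finset.range p,
        (z ^ (b ^ l) - (b : ℂ) * z ^ (b ^ (l + 1)) + ((b : ℂ) - 1) * z ^ ((b + 1) * b ^ l)) /
          ((1 - z ^ (b ^ l)) * (1 - z ^ (b ^ (l + 1))))) ∧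
    (∑ n ∈ Finset.Icc 1 (2 ^ p - 1), (digitSum 2 n : ℂ) * z ^ n =
      ((1 - z ^ (2 ^ p)) / (1 - z)) * ∑ l ∈ Finset.range p,
        z ^ (2 ^ l) / (1 + z ^ (2 ^ l))) := by
  have conv : ∀ c : ℕ, 2 ≤ c →
      ∑ n ∈ Finset.Icc 1 (c ^ p - 1), (digitSum c n : ℂ) * z ^ n =
        ∑ n ∈ Finset.range (c ^ p), (digitSum c n : ℂ) * z ^ n := by
    intro c hc
    have h0 : 0 < c ^ p := Nat.pow_pos (by omega)
    rw [Finset.range_eq_Ico, Finset.sum_eq_sum_Ico_succ_bot h0]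
    rw [show Finset.Icc 1 (c ^ p - 1) = Finset.Ico 1 (c ^ p) by
      rw [← Finset.Ico_add_one_right_eq_Icc]; congr 1; omega]
    simp [digitSum]
  constructor
  · rw [conv b hb]
    exact main_identity b hb z hz p
  · rw [conv 2 (by norm_num), main_identity 2 (by norm_num) z hz p]
    congr 1
    apply Finset.sum_congr rfl
    intro l _
    set u : ℂ := z ^ 2 ^ l with hu_def
    have hu2 : z ^ 2 ^ (l + 1) = u ^ 2 := by rw [hu_def, ← pow_mul, ← pow_succ]
    have hu3 : z ^ ((2 + 1) * 2 ^ l) = u ^ 3 := by rw [hu_def, ← pow_mul, mul_comm]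
    have habs : ‖u‖ < 1 := by
      rw [hu_def, norm_pow]
      exact pow_lt_one₀ (norm_nonneg z) hz (by positivity)
    have h1u : (1 : ℂ) - u ≠ 0 := by
      intro h; rw [sub_eq_zero] at h; rw [← h] at habs; simp at habs
    have h1pu : (1 : ℂ) + u ≠ 0 := by
      intro h
      have : u = -1 := by linear_combination h
      rw [this] at habs; simp at habs
    rw [hu2, hu3]
    have hsq : (1 : ℂ) - u ^ 2 ≠ 0 := by
      have : (1 : ℂ) - u ^ 2 = (1 - u) * (1 + u) := by ring
      rw [this]; exact mul_ne_zero h1u h1pu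
    rw [div_eq_div_iff (mul_ne_zero h1u hsq) h1pu]
    push_cast
    ring
end

section
/- Define, for a positive integer n, c_n = μ(n) if n is odd, and c_n = 2^{ν_2(n)−1}·μ(n/2^{ν_2(n)}) if n is even, where μ is the Möbius function and ν_2 is the 2-adic valuation. Then, for every integer n ≥ 1, ∑_{d | n} c_{n/d}·(s_2(d) − s_2(d−1)) equals 1 if n is a power of 2, and equals 0 otherwise. -/
open scoped Classical

/-- The sequence `c_n`: `μ(n)` for odd `n`, and `2^(ν₂(n)-1)·μ(n/2^(ν₂(n)))` for even `n`. -/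
def cSeq (n : ℕ) : ℤ :=
  if Odd n then ArithmeticFunction.moebius n
  else 2 ^ (padicValNat 2 n - 1) * ArithmeticFunction.moebius (n / 2 ^ padicValNat 2 n)

open Finset ArithmeticFunction

lemma s2_le (n : ℕ) : s2 n ≤ n := Nat.digit_sum_le 2 n

lemma padicValNat_fact (d : ℕ) : (padicValNat 2 (Nat.factorial d) : ℤ) = d - s2 d := by
  haveI : Fact (Nat.Prime 2) := ⟨Nat.prime_two⟩
  have h := sub_one_mul_padicValNat_factorial (p := 2) d
  simp only [show (2:ℕ) - 1 = 1 from rfl, one_mul] at h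
  have hle : s2 d ≤ d := s2_le d
  rw [show (Nat.digits 2 d).sum = s2 d from rfl] at h
  omega

lemma odd_of_dvd_odd {e m : ℕ} (h : e ∣ m) (hm : Odd m) : Odd e := by
  rw [Nat.odd_iff, ← Nat.two_dvd_ne_zero] at hm ⊢
  exact fun h2 => hm (h2.trans h)

lemma keyA (d : ℕ) (hd : 1 ≤ d) :
    (s2 d : ℤ) - s2 (d - 1) = 1 - padicValNat 2 d := by
  haveI : Fact (Nat.Prime 2) := ⟨Nat.prime_two⟩
  have hfac : Nat.factorial d = d * Nat.factorial (d - 1) := by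
    conv_lhs => rw [show d = (d - 1) + 1 by omega]
    rw [Nat.factorial_succ]
    congr 2
    omega
  have hmul : padicValNat 2 (Nat.factorial d) =
      padicValNat 2 d + padicValNat 2 (Nat.factorial (d - 1)) := by
    rw [hfac, padicValNat.mul (by omega) (Nat.factorial_ne_zero _)]
  have hmul' : (padicValNat 2 (Nat.factorial d) : ℤ) =
      (padicValNat 2 d : ℤ) + (padicValNat 2 (Nat.factorial (d - 1)) : ℤ) := by
    exact_mod_cast congrArg (fun x : ℕ => (x : ℤ)) hmul
  have h1 := padicValNat_fact d
  have h2 := padicValNat_fact (d - 1)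
  have hcast : ((d - 1 : ℕ) : ℤ) = (d : ℤ) - 1 := by omega
  rw [hcast] at h2
  linarith

lemma padic_two_pow_mul (i e : ℕ) (he : Odd e) : padicValNat 2 (2 ^ i * e) = i := by
  haveI : Fact (Nat.Prime 2) := ⟨Nat.prime_two⟩
  have he0 : e ≠ 0 := by rintro rfl; simp [Nat.odd_iff] at he
  rw [padicValNat.mul (by positivity) he0, padicValNat.prime_pow,
    padicValNat.eq_zero_of_not_dvd (by rw [Nat.two_dvd_ne_zero, ← Nat.odd_iff]; exact he)]
  omega

lemma cSeq_two_pow_mul (i e : ℕ) (he : Odd e) :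
    cSeq (2 ^ i * e) = (if i = 0 then 1 else 2 ^ (i - 1)) * moebius e := by
  rcases Nat.eq_zero_or_pos i with rfl | hi
  · simp [cSeq, he]
  · have h2 : ¬ Odd (2 ^ i * e) := by
      have hdv : 2 ∣ 2 ^ i * e := dvd_mul_of_dvd_left (dvd_pow_self 2 (by omega)) e
      obtain ⟨k, hk⟩ := hdv
      rw [Nat.odd_iff]
      omega
    rw [cSeq, if_neg h2, padic_two_pow_mul i e he, Nat.mul_div_cancel_left _ (by positivity),
      if_neg (by omega)]

lemma T_sum (a : ℕ) : ∑ i ∈ range (a + 1), (2:ℤ) ^ (a - i) * (1 - i) = a + 1 := by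
  induction a with
  | zero => simp
  | succ b ih =>
    rw [Finset.sum_range_succ]
    have hcongr : ∑ i ∈ range (b + 1), (2:ℤ) ^ (b + 1 - i) * (1 - i)
        = ∑ i ∈ range (b + 1), 2 * ((2:ℤ) ^ (b - i) * (1 - i)) := by
      apply Finset.sum_congr rfl
      intro i hi
      rw [Finset.mem_range] at hi
      rw [show b + 1 - i = (b - i) + 1 by omega, pow_succ]
      ring
    rw [hcongr, ← Finset.mul_sum, ih, Nat.sub_self, pow_zero]
    push_cast
    ring

lemma S_sum (a : ℕ) :
    ∑ i ∈ range (a + 1), (if a - i = 0 then (1:ℤ) else 2 ^ (a - i - 1)) * (1 - i) = 1 := by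
  cases a with
  | zero => simp
  | succ b =>
    rw [Finset.sum_range_succ]
    have hcongr : ∑ i ∈ range (b + 1),
        (if b + 1 - i = 0 then (1:ℤ) else 2 ^ (b + 1 - i - 1)) * (1 - i)
        = ∑ i ∈ range (b + 1), (2:ℤ) ^ (b - i) * (1 - i) := by
      apply Finset.sum_congr rfl
      intro i hi
      rw [Finset.mem_range] at hi
      rw [if_neg (by omega), show b + 1 - i - 1 = b - i by omega]
    rw [hcongr, T_sum, Nat.sub_self, if_pos rfl]
    push_cast
    ring

lemma sum_moebius_div (m : ℕ) (hm : m ≠ 0) :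
    ∑ e ∈ m.divisors, (moebius (m / e) : ℤ) = if m = 1 then 1 else 0 := by
  rw [Nat.sum_div_divisors m (fun e => (moebius e : ℤ))]
  have h := coe_mul_zeta_apply (f := (moebius : ArithmeticFunction ℤ)) (x := m)
  rw [moebius_mul_coe_zeta] at h
  rw [← h, one_apply]

theorem stmt15 (n : ℕ) (hn : 1 ≤ n) :
    ∑ d ∈ n.divisors, cSeq (n / d) * ((s2 d : ℤ) - s2 (d - 1)) =
      if ∃ l : ℕ, n = 2 ^ l then 1 else 0 := by
  haveI : Fact (Nat.Prime 2) := ⟨Nat.prime_two⟩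
  have hn0 : n ≠ 0 := by omega
  obtain ⟨a, m, hnm, hmodd⟩ : ∃ a m : ℕ, n = 2 ^ a * m ∧ Odd m := by
    refine ⟨padicValNat 2 n, n / 2 ^ padicValNat 2 n,
      (Nat.mul_div_cancel' pow_padicValNat_dvd).symm, ?_⟩
    rw [Nat.odd_iff]
    by_contra h
    have h2 : 2 ∣ n / 2 ^ padicValNat 2 n := Nat.dvd_of_mod_eq_zero (by omega)
    obtain ⟨k, hk⟩ := h2
    have h3 : 2 ^ (padicValNat 2 n + 1) ∣ n := by
      refine ⟨k, ?_⟩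
      calc n = 2 ^ padicValNat 2 n * (n / 2 ^ padicValNat 2 n) :=
            (Nat.mul_div_cancel' pow_padicValNat_dvd).symm
        _ = 2 ^ padicValNat 2 n * (2 * k) := by rw [hk]
        _ = 2 ^ (padicValNat 2 n + 1) * k := by rw [pow_succ]; ring
    exact pow_succ_padicValNat_not_dvd hn0 h3
  have hm0 : m ≠ 0 := by
    rintro rfl
    rw [Nat.mul_zero] at hnm
    omega
  have hva : padicValNat 2 n = a := by rw [hnm, padic_two_pow_mul a m hmodd]
  -- step 1: rewrite integrand using keyA
  have step1 : ∑ d ∈ n.divisors, cSeq (n / d) * ((s2 d : ℤ) - s2 (d - 1)) =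
      ∑ d ∈ n.divisors, cSeq (n / d) * (1 - (padicValNat 2 d : ℤ)) := by
    apply Finset.sum_congr rfl
    intro d hd
    rw [keyA d (Nat.pos_of_mem_divisors hd)]
  rw [step1]
  -- division formula
  have hquot : ∀ i ≤ a, ∀ e ∈ m.divisors, n / (2 ^ i * e) = 2 ^ (a - i) * (m / e) := by
    intro i hi e he
    obtain ⟨hedvd, -⟩ := Nat.mem_divisors.mp he
    have he0 : e ≠ 0 := by
      rintro rfl; exact hm0 (Nat.eq_zero_of_zero_dvd hedvd)
    apply Nat.div_eq_of_eq_mul_left (by positivity)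
    rw [hnm]
    have h1 : 2 ^ a = 2 ^ (a - i) * 2 ^ i := by
      rw [← pow_add]; congr 1; omega
    have h2 : m = (m / e) * e := (Nat.div_mul_cancel hedvd).symm
    rw [h1]; nth_rw 1 [h2]; ring
  -- step 2: reindex over pairs
  have step2 : ∑ d ∈ n.divisors, cSeq (n / d) * (1 - (padicValNat 2 d : ℤ)) =
      ∑ p ∈ (range (a + 1)) ×ˢ m.divisors,
        cSeq (2 ^ (a - p.1) * (m / p.2)) * (1 - (p.1 : ℤ)) := by
    rw [eq_comm]
    apply Finset.sum_nbij' (i := fun p => 2 ^ p.1 * p.2)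
      (j := fun d => (padicValNat 2 d, d / 2 ^ padicValNat 2 d))
    · rintro ⟨i, e⟩ hp
      simp only [Finset.mem_product, Finset.mem_range] at hp
      rw [Nat.mem_divisors, hnm]
      exact ⟨mul_dvd_mul (pow_dvd_pow 2 (by omega)) (Nat.mem_divisors.mp hp.2).1,
        hnm ▸ hn0⟩
    · intro d hd
      obtain ⟨hddvd, -⟩ := Nat.mem_divisors.mp hd
      have hd0 : d ≠ 0 := (Nat.pos_of_mem_divisors hd).ne'
      have hdv : 2 ^ padicValNat 2 d ∣ d := pow_padicValNat_dvd
      have heodd : Odd (d / 2 ^ padicValNat 2 d) := by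
        rw [Nat.odd_iff]
        by_contra h
        have h2 : 2 ∣ d / 2 ^ padicValNat 2 d := Nat.dvd_of_mod_eq_zero (by omega)
        obtain ⟨k, hk⟩ := h2
        have h3 : 2 ^ (padicValNat 2 d + 1) ∣ d := by
          refine ⟨k, ?_⟩
          calc d = 2 ^ padicValNat 2 d * (d / 2 ^ padicValNat 2 d) :=
                (Nat.mul_div_cancel' hdv).symm
            _ = 2 ^ padicValNat 2 d * (2 * k) := by rw [hk]
            _ = 2 ^ (padicValNat 2 d + 1) * k := by rw [pow_succ]; ring
        exact pow_succ_padicValNat_not_dvd hd0 h3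
      simp only [Finset.mem_product, Finset.mem_range]
      constructor
      · have h4 : padicValNat 2 d ≤ padicValNat 2 n :=
          (padicValNat_dvd_iff_le hn0).mp (hdv.trans hddvd)
        omega
      · rw [Nat.mem_divisors]
        refine ⟨?_, hm0⟩
        have hedvd : (d / 2 ^ padicValNat 2 d) ∣ n :=
          (Nat.div_dvd_of_dvd hdv).trans hddvd
        have hcop : Nat.Coprime (d / 2 ^ padicValNat 2 d) (2 ^ a) := by
          apply Nat.Coprime.pow_right
          exact (Nat.prime_two.coprime_iff_not_dvd.mpr (by
            rw [Nat.two_dvd_ne_zero, ← Nat.odd_iff]; exact heodd)).symm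
        rw [hnm] at hedvd
        exact Nat.Coprime.dvd_of_dvd_mul_left hcop hedvd
    · rintro ⟨i, e⟩ hp
      simp only [Finset.mem_product, Finset.mem_range] at hp
      have heodd : Odd e := odd_of_dvd_odd (Nat.mem_divisors.mp hp.2).1 hmodd
      simp only [Prod.mk.injEq]
      rw [padic_two_pow_mul i e heodd]
      exact ⟨rfl, Nat.mul_div_cancel_left _ (by positivity)⟩
    · intro d hd
      exact Nat.mul_div_cancel' pow_padicValNat_dvd
    · rintro ⟨i, e⟩ hp
      simp only [Finset.mem_product, Finset.mem_range] at hp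
      have heodd : Odd e := odd_of_dvd_odd (Nat.mem_divisors.mp hp.2).1 hmodd
      simp only
      rw [padic_two_pow_mul i e heodd, hquot i (by omega) e hp.2]
  rw [step2]
  -- step 3: evaluate
  have step3 : ∑ p ∈ (range (a + 1)) ×ˢ m.divisors,
      cSeq (2 ^ (a - p.1) * (m / p.2)) * (1 - (p.1 : ℤ)) =
      (∑ i ∈ range (a + 1), (if a - i = 0 then (1:ℤ) else 2 ^ (a - i - 1)) * (1 - i)) *
      (∑ e ∈ m.divisors, (moebius (m / e) : ℤ)) := by
    rw [Finset.sum_product, Finset.sum_mul]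
    apply Finset.sum_congr rfl
    intro i hi
    rw [Finset.mul_sum]
    apply Finset.sum_congr rfl
    intro e he
    have hqodd : Odd (m / e) :=
      odd_of_dvd_odd (Nat.div_dvd_of_dvd (Nat.mem_divisors.mp he).1) hmodd
    rw [cSeq_two_pow_mul (a - i) (m / e) hqodd]
    ring
  rw [step3, S_sum, one_mul, sum_moebius_div m hm0]
  -- step 4: the two conditions agree
  have hiff : (∃ l : ℕ, n = 2 ^ l) ↔ m = 1 := by
    constructor
    · rintro ⟨l, hl⟩
      have hdvd2 : m ∣ 2 ^ l := by
        rw [← hl, hnm]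
        exact Dvd.intro_left _ rfl
      have hcop : Nat.Coprime m 2 :=
        (Nat.prime_two.coprime_iff_not_dvd.mpr (by
          rw [Nat.two_dvd_ne_zero, ← Nat.odd_iff]; exact hmodd)).symm
      exact (hcop.pow_right l).eq_one_of_dvd hdvd2
    · rintro rfl
      exact ⟨a, by rw [hnm, Nat.mul_one]⟩
  exact if_congr hiff.symm rfl rfl
end
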